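/- arXiv:1610.09879 — 5 statements merged into one kernel-verified Lean document; each statement's English description precedes it below -/
import Mathlib

section
/- Let M_p be a positive sequence with M_0 = 1 satisfying (M.1): M_p^2 ≤ M_{p-1}·M_{p+1} for all p ≥ 1, and (M.2)': M_{p+1} ≤ A·H^p·M_p for some A, H > 1 and all p. Let M(t) = sup_{p∈ℕ} log(t^p / M_p) for t > 0, with M(0)=0. Then for every η > 0 and all t > 0, t^η · exp(−M(H^η t)) ≤ A^η · exp(−M(t)). -/
/-- `assocExp M t = exp(M(t))` where `M(t) = sup_p log(t^p/M_p)` is the associated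
function of the weight sequence `M`; valued in `ℝ≥0∞` to allow `M(t) = ∞`. -/
noncomputable def assocExp (M : ℕ → ℝ) (t : ℝ) : ENNReal :=
  ⨆ p : ℕ, ENNReal.ofReal (t ^ p / M p)

lemma iterM2 (M : ℕ → ℝ) (hMpos : ∀ p, 0 < M p) (A H : ℝ) (hA : 1 < A) (hH : 1 < H)
    (hM2 : ∀ p : ℕ, M (p + 1) ≤ A * H ^ p * M p) :
    ∀ n p : ℕ, M (p + n) ≤ A ^ n * H ^ (n * p + n.choose 2) * M p := by
  intro n
  induction n with
  | zero => intro p; simp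
  | succ n ih =>
    intro p
    have h1 : M (p + (n + 1)) ≤ A * H ^ (p + n) * M (p + n) := by
      have := hM2 (p + n); rwa [show p + (n+1) = (p+n)+1 by ring]
    have h2 : A * H ^ (p + n) * M (p + n) ≤
        A * H ^ (p + n) * (A ^ n * H ^ (n * p + n.choose 2) * M p) := by
      apply mul_le_mul_of_nonneg_left (ih p)
      positivity
    have he : (n+1) * p + (n+1).choose 2 = (n * p + n.choose 2) + (p + n) := by
      rw [Nat.choose_succ_succ, Nat.choose_one_right]; ring
    calc M (p + (n+1)) ≤ A * H ^ (p + n) * (A ^ n * H ^ (n * p + n.choose 2) * M p) :=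
          h1.trans h2
      _ = A ^ (n+1) * H ^ ((n+1) * p + (n+1).choose 2) * M p := by
          rw [he, pow_add, pow_succ]; ring

/-- If the weight sequence `M_p` (positive, `M_0 = 1`) satisfies
(M.1) `M_p² ≤ M_{p-1}M_{p+1}` and (M.2)' `M_{p+1} ≤ A·H^p·M_p` with `A, H > 1`, then
for every `η > 0` and all `t > 0`, `t^η · e^{−M(H^η t)} ≤ A^η · e^{−M(t)}`;
equivalently (in exponential form) `t^η · e^{M(t)} ≤ A^η · e^{M(H^η t)}`. -/
theorem stmt4 (M : ℕ → ℝ) (hMpos : ∀ p, 0 < M p) (hM0 : M 0 = 1)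
    (hM1 : ∀ p : ℕ, 1 ≤ p → (M p) ^ 2 ≤ M (p - 1) * M (p + 1))
    (A H : ℝ) (hA : 1 < A) (hH : 1 < H)
    (hM2 : ∀ p : ℕ, M (p + 1) ≤ A * H ^ p * M p)
    (η t : ℝ) (hη : 0 < η) (ht : 0 < t) :
    ENNReal.ofReal (t ^ η) * assocExp M t ≤
      ENNReal.ofReal (A ^ η) * assocExp M (H ^ η * t) := by
  have hA0 : (0:ℝ) < A := lt_trans one_pos hA
  have hH0 : (0:ℝ) < H := lt_trans one_pos hH
  set n : ℕ := ⌈η⌉₊ with hn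
  have hn0 : 0 < n := Nat.ceil_pos.mpr hη
  have hηn : η ≤ (n : ℝ) := Nat.le_ceil η
  have hn1 : (n : ℝ) - 1 ≤ η := by
    have := Nat.ceil_lt_add_one (le_of_lt hη)
    push_cast at this ⊢
    linarith
  set θ : ℝ := η / n with hθ
  have hnpos : (0:ℝ) < n := by exact_mod_cast hn0
  have hθ0 : 0 < θ := div_pos hη hnpos
  have hθn : θ * n = η := by rw [hθ, div_mul_cancel₀ η hnpos.ne']
  have hθ1 : θ ≤ 1 := by rw [hθ, div_le_one hnpos]; exact hηn
  have hs : (0:ℝ) < H ^ η * t := by positivity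
  -- key real inequality
  have key : ∀ p : ℕ, t ^ η * (t ^ p / M p) ≤
      A ^ η * max ((H ^ η * t) ^ p / M p) ((H ^ η * t) ^ (p + n) / M (p + n)) := by
    intro p
    set Y := (H ^ η * t) ^ p / M p with hY
    set Z := (H ^ η * t) ^ (p + n) / M (p + n) with hZ
    have hMp := hMpos p
    have hMpn := hMpos (p + n)
    have hYpos : 0 < Y := by rw [hY]; positivity
    have hZpos : 0 < Z := by rw [hZ]; positivity
    have hLpos : 0 < t ^ η * (t ^ p / M p) := by positivity
    have hRpos : 0 < A ^ η * max Y Z :=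
      mul_pos (Real.rpow_pos_of_pos hA0 η) (lt_max_of_lt_left hYpos)
    rw [← Real.log_le_log_iff hLpos hRpos]
    have hlogmax : Real.log (max Y Z) = max (Real.log Y) (Real.log Z) := by
      rcases le_total Y Z with h | h
      · rw [max_eq_right h, max_eq_right (Real.log_le_log hYpos h)]
      · rw [max_eq_left h, max_eq_left (Real.log_le_log hZpos h)]
    set lt := Real.log t
    set lA := Real.log A
    set lH := Real.log H
    set a := Real.log (M p)
    set b := Real.log (M (p + n))
    have hlA : 0 ≤ lA := Real.log_nonneg (le_of_lt hA)
    have hlH : 0 ≤ lH := Real.log_nonneg (le_of_lt hH)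
    have hlY : Real.log Y = p * (η * lH + lt) - a := by
      rw [hY, Real.log_div (by positivity) (ne_of_gt (hMpos p)), Real.log_pow,
        Real.log_mul (by positivity) (ne_of_gt ht), Real.log_rpow hH0]
      try push_cast
      try ring
    have hlZ : Real.log Z = (p + n) * (η * lH + lt) - b := by
      rw [hZ, Real.log_div (by positivity) (ne_of_gt (hMpos (p+n))), Real.log_pow,
        Real.log_mul (by positivity) (ne_of_gt ht), Real.log_rpow hH0]
      try push_cast
      try ring
    have hlL : Real.log (t ^ η * (t ^ p / M p)) = η * lt + p * lt - a := by
      rw [Real.log_mul (by positivity) (by positivity),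
        Real.log_div (by positivity) (ne_of_gt (hMpos p)), Real.log_pow,
        Real.log_rpow ht]
      ring
    have hlR : Real.log (A ^ η * max Y Z) = η * lA + max (Real.log Y) (Real.log Z) := by
      rw [Real.log_mul (by positivity) (ne_of_gt (lt_max_of_lt_left hYpos)),
        Real.log_rpow hA0, hlogmax]
    rw [hlL, hlR]
    -- bound on b - a from iterated (M.2)'
    have hC : (2:ℝ) * (n.choose 2 : ℝ) = (n : ℝ) * ((n : ℝ) - 1) := by
      have h2 : n.choose 2 * 2 = n * (n - 1) := by
        rw [Nat.choose_two_right]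
        exact Nat.div_mul_cancel (Nat.even_mul_pred_self n).two_dvd
      have := congrArg (Nat.cast (R := ℝ)) h2
      push_cast [Nat.cast_sub hn0] at this
      linarith
    have hba : b - a ≤ n * lA + (n * p + (n.choose 2 : ℝ)) * lH := by
      have h := iterM2 M hMpos A H hA hH hM2 n p
      have hlog := Real.log_le_log (hMpos (p + n)) h
      rw [Real.log_mul (by positivity) (ne_of_gt (hMpos p)),
        Real.log_mul (by positivity) (by positivity),
        Real.log_pow, Real.log_pow] at hlog
      push_cast at hlog
      linarith
    have hconv : (1 - θ) * Real.log Y + θ * Real.log Z ≤ max (Real.log Y) (Real.log Z) := by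
      rcases le_total (Real.log Y) (Real.log Z) with h | h
      · rw [max_eq_right h]
        have := mul_le_mul_of_nonneg_left h (by linarith : (0:ℝ) ≤ 1 - θ)
        linarith
      · rw [max_eq_left h]
        have := mul_le_mul_of_nonneg_left h hθ0.le
        linarith
    have hbd : θ * (b - a) ≤ η * lA + η * (p:ℝ) * lH + η * η * lH := by
      have h1 : θ * (b - a) ≤ θ * ((n:ℝ) * lA + ((n:ℝ) * p + (n.choose 2 : ℝ)) * lH) :=
        mul_le_mul_of_nonneg_left hba (le_of_lt hθ0)
      have h2 : θ * (n.choose 2 : ℝ) * lH ≤ η * η * lH := by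
        have h3 : θ * (n.choose 2 : ℝ) ≤ η * η := by
          have e : 2 * (θ * (n.choose 2 : ℝ)) = η * ((n:ℝ) - 1) := by
            linear_combination θ * hC + ((n:ℝ) - 1) * hθn
          have e2 : η * ((n:ℝ) - 1) ≤ η * η := mul_le_mul_of_nonneg_left hn1 hη.le
          nlinarith [mul_nonneg hη.le hη.le]
        exact mul_le_mul_of_nonneg_right h3 hlH
      have hexp2 : θ * ((n:ℝ) * lA + ((n:ℝ) * p + (n.choose 2 : ℝ)) * lH) =
          η * lA + η * (p:ℝ) * lH + θ * (n.choose 2 : ℝ) * lH := by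
        linear_combination (lA + (p:ℝ) * lH) * hθn
      rw [hexp2] at h1
      linarith
    have hmain : η * lt + p * lt - a ≤ η * lA + ((1 - θ) * Real.log Y + θ * Real.log Z) := by
      rw [hlY, hlZ]
      have hexp : η * lA + ((1 - θ) * ((p:ℝ) * (η * lH + lt) - a) +
          θ * (((p:ℝ) + (n:ℝ)) * (η * lH + lt) - b)) =
          η * lA + η * (p:ℝ) * lH + η * η * lH + (η * lt + (p:ℝ) * lt - a) - θ * (b - a) := by
        linear_combination (η * lH + lt) * hθn
      push_cast
      rw [hexp]
      linarith [hbd]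
    linarith [hconv]
  -- ENNReal glue
  have hts : 0 ≤ t ^ η := le_of_lt (Real.rpow_pos_of_pos ht η)
  rw [assocExp, ENNReal.mul_iSup]
  apply iSup_le
  intro p
  rw [← ENNReal.ofReal_mul hts]
  calc ENNReal.ofReal (t ^ η * (t ^ p / M p))
      ≤ ENNReal.ofReal (A ^ η * max ((H ^ η * t) ^ p / M p) ((H ^ η * t) ^ (p + n) / M (p + n))) :=
        ENNReal.ofReal_le_ofReal (key p)
    _ = ENNReal.ofReal (A ^ η) *
        ENNReal.ofReal (max ((H ^ η * t) ^ p / M p) ((H ^ η * t) ^ (p + n) / M (p + n))) := by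
        rw [ENNReal.ofReal_mul (le_of_lt (Real.rpow_pos_of_pos hA0 η))]
    _ ≤ ENNReal.ofReal (A ^ η) * assocExp M (H ^ η * t) := by
        apply mul_le_mul_right
        rcases le_total ((H ^ η * t) ^ p / M p) ((H ^ η * t) ^ (p + n) / M (p + n)) with h | h
        · rw [max_eq_right h]; exact le_iSup (fun q => ENNReal.ofReal ((H ^ η * t) ^ q / M q)) (p + n)
        · rw [max_eq_left h]; exact le_iSup (fun q => ENNReal.ofReal ((H ^ η * t) ^ q / M q)) p
end

section
/- For every solid harmonic Q_j of degree j on ℝ^n (n ≥ 2) and every nonzero multi-index α, the supremum of |∂^α Q_j| on the unit sphere satisfies ‖∂^α Q_j‖_{L^∞(S^{n-1})} ≤ e^{n/4−1/2}·√n · 2^{|α|/2} · j^{|α|+n/2−1} · ‖Q_j‖_{L^∞(S^{n-1})}. -/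
open MvPolynomial

/-- The iterated partial derivative `∂^α` of multi-index `α` acting on polynomials. -/
noncomputable def pderivMulti (n : ℕ) (α : Fin n → ℕ) :
    MvPolynomial (Fin n) ℝ →ₗ[ℝ] MvPolynomial (Fin n) ℝ :=
  ((List.finRange n).map fun i => ((MvPolynomial.pderiv (R := ℝ) i).toLinearMap ^ (α i))).prod

/-- The sup of `|Q|` over the unit sphere `S^{n-1}`. -/
noncomputable def supSphere (n : ℕ) (Q : MvPolynomial (Fin n) ℝ) : ℝ :=
  ⨆ x : Metric.sphere (0 : EuclideanSpace ℝ (Fin n)) 1,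
    |MvPolynomial.eval (fun i => (x : EuclideanSpace ℝ (Fin n)) i) Q|

section BernsteinCore
open Complex Finset Polynomial

section Bernstein

noncomputable def tb (m k : ℕ) : ℝ := (2 * k + 1) * Real.pi / (2 * m)
noncomputable def ub (m k : ℕ) : ℂ := Complex.exp (tb m k * I)

variable {m : ℕ} (hm : 1 ≤ m)
include hm

lemma tb_pos (k : ℕ) : 0 < tb m k := by
  apply div_pos (by positivity) (by positivity)

lemma tb_lt {k : ℕ} (hk : k < 2 * m) : tb m k < 2 * Real.pi := by
  rw [tb, div_lt_iff₀ (by positivity)]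
  have hk' : (k : ℝ) ≤ 2 * m - 1 := by
    have : (k:ℝ) + 1 ≤ 2*m := by exact_mod_cast hk
    linarith
  nlinarith [Real.pi_pos]

lemma ub_pow (k : ℕ) : ub m k ^ (2 * m) = -1 := by
  rw [ub, ← Complex.exp_nat_mul]
  have hm' : (m : ℂ) ≠ 0 := Nat.cast_ne_zero.mpr (by omega)
  have h1 : ((2 * m : ℕ) : ℂ) * (tb m k * I) = ((2 * k + 1 : ℕ) : ℂ) * (Real.pi * I) := by
    rw [tb]; push_cast; field_simp
  rw [h1, Complex.exp_nat_mul, Complex.exp_pi_mul_I]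
  exact Odd.neg_one_pow ⟨k, by ring⟩

lemma ub_ne_one {k : ℕ} (hk : k < 2 * m) : ub m k ≠ 1 := by
  rw [ub]
  intro h
  rw [Complex.exp_eq_one_iff] at h
  obtain ⟨z, hz⟩ := h
  have h2 : tb m k = (z:ℝ) * (2 * Real.pi) := by
    have h0 : (tb m k : ℂ) * I = (((z:ℝ) * (2 * Real.pi) : ℝ) : ℂ) * I := by
      push_cast; linear_combination hz
    have := mul_right_cancel₀ I_ne_zero h0
    exact_mod_cast this
  have h3 := tb_pos hm (m := m) k
  have h4 := tb_lt hm hk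
  have hπ := Real.pi_pos
  rcases le_or_gt z 0 with hz0 | hz0
  · have : (z:ℝ) ≤ 0 := by exact_mod_cast hz0
    nlinarith
  · have : (1:ℝ) ≤ (z:ℝ) := by exact_mod_cast hz0
    nlinarith

omit hm in
lemma ub_ne_zero (k : ℕ) : ub m k ≠ 0 := Complex.exp_ne_zero _

lemma one_sub_ub_ne_zero {k : ℕ} (hk : k < 2 * m) : (1 : ℂ) - ub m k ≠ 0 :=
  fun h => ub_ne_one hm hk (by linear_combination -h)

lemma geom_ub {k : ℕ} (hk : k < 2 * m) :
    (1 - ub m k) * ∑ r ∈ range (2 * m), ub m k ^ r = 2 := by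
  have := geom_sum_mul (ub m k) (2 * m)
  rw [ub_pow hm] at this
  linear_combination -this

end Bernstein

section Bernstein2

noncomputable def pb (m r : ℕ) : ℂ := ∑ k ∈ range (2*m), ub m k ^ r

noncomputable def Bb (m c : ℕ) : ℂ := ∑ k ∈ range (2*m), ub m k ^ c / (1 - ub m k)

noncomputable def Gb (m s : ℕ) : ℂ := ∑ k ∈ range (2*m), ub m k ^ (s+1) / (1 - ub m k)^2

variable {m : ℕ} (hm : 1 ≤ m)
include hm

omit hm in
lemma pb_zero : pb m 0 = (2*m : ℕ) := by
  simp [pb]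

lemma pb_2m : pb m (2*m) = -(2*m : ℕ) := by
  rw [pb]
  rw [Finset.sum_congr rfl (fun k _ => ub_pow hm k)]
  simp

omit hm in
lemma ub_pow_eq (k r : ℕ) : ub m k ^ r = Complex.exp ((r * tb m k : ℝ) * I) := by
  rw [ub, ← Complex.exp_nat_mul]
  push_cast
  ring_nf

lemma pb_eq_zero {r : ℕ} (hr0 : 0 < r) (hr4 : r < 4*m) (hr2 : r ≠ 2*m) : pb m r = 0 := by
  set ζ : ℂ := Complex.exp ((r * Real.pi / (2*m) : ℝ) * I) with hζdef
  have hmR : (0:ℝ) < m := by exact_mod_cast hm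
  have hterm : ∀ k : ℕ, ub m k ^ r = ζ * (ζ^2)^k := by
    intro k
    rw [ub_pow_eq, hζdef, ← pow_mul, ← pow_succ', ← Complex.exp_nat_mul]
    congr 1
    rw [tb]
    push_cast
    field_simp
  have hζ2 : ζ^2 ≠ 1 := by
    rw [hζdef, ← Complex.exp_nat_mul]
    intro h
    rw [Complex.exp_eq_one_iff] at h
    obtain ⟨z, hz⟩ := h
    push_cast at hz
    have h2 : (2:ℝ) * (r * Real.pi / (2*m)) = (z:ℝ) * (2 * Real.pi) := by
      have h0 : ((2 * (r * Real.pi / (2*m)) : ℝ) : ℂ) * I = (((z:ℝ) * (2 * Real.pi) : ℝ) : ℂ) * I := by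
        push_cast; linear_combination hz
      exact_mod_cast mul_right_cancel₀ I_ne_zero h0
    have hπ := Real.pi_pos
    have h3 : (r : ℝ) = (z:ℝ) * (2 * m) := by
      field_simp at h2
      nlinarith [h2]
    have hr4' : (r:ℝ) < 4*m := by exact_mod_cast hr4
    have hr0' : (0:ℝ) < r := by exact_mod_cast hr0
    rcases lt_trichotomy (z:ℝ) 1 with h | h | h
    · have : (z:ℝ) ≤ 0 := by
        by_contra hc
        push_neg at hc
        have : (1:ℝ) ≤ z := by exact_mod_cast (by exact_mod_cast hc : 0 < z)
        linarith
      nlinarith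
    · have : (r:ℝ) = 2*m := by rw [h3, h]; ring
      exact hr2 (by exact_mod_cast this)
    · have : (2:ℝ) ≤ z := by exact_mod_cast (by exact_mod_cast h : 1 < z)
      nlinarith
  have htop : (ζ^2)^(2*m) = 1 := by
    rw [hζdef, ← pow_mul, ← Complex.exp_nat_mul]
    have harg : ((2*(2*m) : ℕ) : ℂ) * ((r * Real.pi / (2*m) : ℝ) * I) = ((r:ℤ)) * (2 * Real.pi * I) := by
      have hm' : (m : ℂ) ≠ 0 := Nat.cast_ne_zero.mpr (by omega)
      push_cast
      field_simp
    rw [harg]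
    exact_mod_cast Complex.exp_int_mul_two_pi_mul_I r
  rw [pb, Finset.sum_congr rfl (fun k _ => hterm k), ← Finset.mul_sum,
    geom_sum_eq hζ2, htop]
  simp

lemma Bb_zero : Bb m 0 = (m:ℕ) := by
  have key : ∀ k ∈ range (2*m), ub m k ^ 0 / (1 - ub m k)
      = (∑ r ∈ range (2*m), ub m k ^ r) / 2 := by
    intro k hk
    rw [mem_range] at hk
    have hne := one_sub_ub_ne_zero hm hk
    have hg := geom_ub hm hk
    rw [pow_zero, div_eq_div_iff hne (two_ne_zero)]
    linear_combination -hg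
  rw [Bb, Finset.sum_congr rfl key, ← Finset.sum_div, Finset.sum_comm]
  have h2 : ∀ r ∈ range (2*m), ∑ k ∈ range (2*m), ub m k ^ r = pb m r := fun r _ => rfl
  rw [Finset.sum_congr rfl h2]
  have h3 : ∑ r ∈ range (2*m), pb m r = pb m 0 := by
    apply Finset.sum_eq_single_of_mem 0 (by simp; omega)
    intro r hr hr0
    rw [mem_range] at hr
    exact pb_eq_zero hm (Nat.pos_of_ne_zero hr0) (by omega) (by omega)
  rw [h3, pb_zero]
  push_cast
  ring

lemma Bb_succ (c : ℕ) : Bb m (c+1) = Bb m c - pb m c := by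
  rw [Bb, Bb, pb, ← Finset.sum_sub_distrib]
  refine Finset.sum_congr rfl fun k hk => ?_
  rw [mem_range] at hk
  have hne := one_sub_ub_ne_zero hm hk
  field_simp
  ring

lemma Bb_val1 {c : ℕ} (hc1 : 1 ≤ c) (hc2 : c ≤ 2*m) : Bb m c = -(m:ℕ) := by
  induction c, hc1 using Nat.le_induction with
  | base =>
    rw [show (1:ℕ) = 0 + 1 from rfl, Bb_succ hm, Bb_zero hm, pb_zero]
    push_cast; ring
  | succ c hc ih =>
    rw [Bb_succ hm, ih (by omega), pb_eq_zero hm (by omega) (by omega) (by omega)]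
    ring

lemma Bb_val2 {c : ℕ} (hc1 : 2*m+1 ≤ c) (hc2 : c ≤ 4*m) : Bb m c = (m:ℕ) := by
  induction c, hc1 using Nat.le_induction with
  | base =>
    rw [Bb_succ hm, Bb_val1 hm (by omega) (by omega), pb_2m hm]
    push_cast; ring
  | succ c hc ih =>
    rw [Bb_succ hm, ih (by omega), pb_eq_zero hm (by omega) (by omega) (by omega)]
    ring

lemma Gb_eq (s : ℕ) : Gb m s = (∑ r ∈ range (2*m), Bb m (s+1+r)) / 2 := by
  have : ∀ r ∈ range (2*m), Bb m (s+1+r)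
      = ∑ k ∈ range (2*m), ub m k ^ (s+1+r) / (1 - ub m k) := fun r _ => rfl
  rw [Finset.sum_congr rfl this, Finset.sum_comm]
  rw [Gb, Finset.sum_div]
  refine Finset.sum_congr rfl fun k hk => ?_
  rw [mem_range] at hk
  have hne := one_sub_ub_ne_zero hm hk
  have hg := geom_ub hm hk
  have : ∀ r ∈ range (2*m), ub m k ^ (s+1+r) / (1 - ub m k)
      = ub m k ^ (s+1) / (1 - ub m k) * ub m k ^ r := by
    intro r _
    rw [pow_add]
    ring
  have hS : ∑ r ∈ range (2*m), ub m k ^ r = 2 / (1 - ub m k) := by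
    rw [eq_div_iff hne]
    linear_combination hg
  rw [Finset.sum_congr rfl this, ← Finset.mul_sum, hS]
  field_simp

lemma Gb_val {s : ℕ} (hs : s ≤ 2*m) : Gb m s = m * ((s:ℂ) - m) := by
  rw [Gb_eq hm]
  have key : ∀ r ∈ range (2*m), Bb m (s+1+r) = if r < 2*m - s then -(m:ℂ) else (m:ℂ) := by
    intro r hr
    rw [mem_range] at hr
    split_ifs with h
    · exact_mod_cast Bb_val1 hm (by omega) (by omega)
    · exact_mod_cast Bb_val2 hm (by omega) (by omega)
  rw [Finset.sum_congr rfl key]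
  have hsplit : ∑ r ∈ range (2*m), (if r < 2*m - s then -(m:ℂ) else (m:ℂ))
      = ((2*m - s : ℕ) : ℂ) * (-(m:ℂ)) + ((s:ℕ) : ℂ) * m := by
    rw [Finset.range_eq_Ico,
      ← Finset.sum_Ico_consecutive _ (Nat.zero_le (2*m-s)) (by omega : 2*m - s ≤ 2*m)]
    have e1 : ∑ r ∈ Finset.Ico 0 (2*m-s), (if r < 2*m - s then -(m:ℂ) else (m:ℂ))
        = ((2*m - s : ℕ) : ℂ) * (-(m:ℂ)) := by
      rw [Finset.sum_congr rfl (fun r hr => if_pos (by rw [Finset.mem_Ico] at hr; omega))]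
      rw [Finset.sum_const, Nat.card_Ico, nsmul_eq_mul]
      norm_num
    have e2 : ∑ r ∈ Finset.Ico (2*m-s) (2*m), (if r < 2*m - s then -(m:ℂ) else (m:ℂ))
        = ((s:ℕ) : ℂ) * m := by
      rw [Finset.sum_congr rfl (fun r hr => if_neg (by rw [Finset.mem_Ico] at hr; omega))]
      rw [Finset.sum_const, Nat.card_Ico, nsmul_eq_mul]
      congr 2
      omega
    rw [e1, e2]
  rw [hsplit, Nat.cast_sub hs]
  push_cast
  ring

end Bernstein2

section Bernstein3

noncomputable def wb (m k : ℕ) : ℝ := 1 / Real.sin (tb m k / 2) ^ 2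

variable {m : ℕ} (hm : 1 ≤ m)
include hm

lemma sin_tb_pos {k : ℕ} (hk : k < 2*m) : 0 < Real.sin (tb m k / 2) := by
  apply Real.sin_pos_of_pos_of_lt_pi
  · have := tb_pos hm (m := m) k; linarith
  · have := tb_lt hm hk; linarith

lemma wb_pos {k : ℕ} (hk : k < 2*m) : 0 < wb m k := by
  have := sin_tb_pos hm hk
  rw [wb]; positivity

lemma wb_eq {k : ℕ} (hk : k < 2*m) :
    ((wb m k : ℝ) : ℂ) = -4 * ub m k / (1 - ub m k)^2 := by
  set h : ℝ := tb m k / 2 with hh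
  have hsin := sin_tb_pos hm hk
  have hE : Complex.exp (h * I) ≠ 0 := Complex.exp_ne_zero _
  have hu : ub m k = Complex.exp (h * I) ^ 2 := by
    rw [ub, ← Complex.exp_nat_mul]
    congr 1
    push_cast [hh]
    ring
  have hs : ((Real.sin h : ℝ) : ℂ) = ((Complex.exp (↑h*I))⁻¹ - Complex.exp (↑h*I)) * I / 2 := by
    rw [Complex.ofReal_sin, Complex.sin, ← Complex.exp_neg]
    ring_nf
  have hx : Complex.exp (↑h*I) * (Complex.exp (↑h*I))⁻¹ = 1 := mul_inv_cancel₀ hE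
  have hkey : (1 - ub m k)^2 = -4 * ub m k * ((Real.sin h : ℝ) : ℂ)^2 := by
    rw [hu, hs]
    set E := Complex.exp (↑h*I) with hEdef
    linear_combination (E^2*(E⁻¹ - E)^2) * Complex.I_sq
      + (-(1 + E*E⁻¹ - 2*E^2)) * hx
  have hsne : ((Real.sin h : ℝ) : ℂ) ≠ 0 := by
    exact_mod_cast hsin.ne'
  have hune : (1 - ub m k) ≠ 0 := one_sub_ub_ne_zero hm hk
  rw [wb, Complex.ofReal_div, Complex.ofReal_one, Complex.ofReal_pow]
  rw [div_eq_div_iff (pow_ne_zero 2 hsne) (pow_ne_zero 2 hune)]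
  linear_combination hkey

lemma wb_sum_complex : ∑ k ∈ range (2*m), ((wb m k : ℝ) : ℂ) = 4 * (m:ℂ)^2 := by
  have h1 : ∀ k ∈ range (2*m), ((wb m k : ℝ):ℂ) = -4 * (ub m k ^ (0+1) / (1 - ub m k)^2) := by
    intro k hk
    rw [mem_range] at hk
    rw [wb_eq hm hk]
    ring
  rw [Finset.sum_congr rfl h1, ← Finset.mul_sum]
  have : ∑ k ∈ range (2*m), ub m k ^ (0+1) / (1 - ub m k)^2 = Gb m 0 := rfl
  rw [this, Gb_val hm (by omega)]
  push_cast
  ring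

lemma wb_sum : ∑ k ∈ range (2*m), wb m k = 4 * (m:ℝ)^2 := by
  have := wb_sum_complex hm
  exact_mod_cast this

lemma exp_neg_m_tb (k : ℕ) :
    Complex.exp ((-(m * tb m k) : ℝ) * I) = (-1:ℂ)^k * (-I) := by
  have h1 : Complex.exp (((m * tb m k : ℝ)) * I) = (-1:ℂ)^k * I := by
    have harg : ((m * tb m k : ℝ) : ℂ) * I = (k:ℕ) * (Real.pi * I) + (Real.pi/2 : ℝ) * I := by
      rw [tb]
      have hm' : (m:ℂ) ≠ 0 := Nat.cast_ne_zero.mpr (by omega)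
      push_cast
      field_simp
    rw [harg, Complex.exp_add, Complex.exp_nat_mul, Complex.exp_pi_mul_I]
    congr 1
    push_cast
    rw [Complex.exp_mul_I]
    simp
  have h2 : ((-(m * tb m k) : ℝ) : ℂ) * I = -(((m * tb m k : ℝ):ℂ) * I) := by push_cast; ring
  rw [h2, Complex.exp_neg, h1]
  have : ((-1:ℂ)^k)⁻¹ = (-1:ℂ)^k := by
    rcases Nat.even_or_odd k with h | h
    · rw [h.neg_one_pow]; norm_num
    · rw [h.neg_one_pow]; norm_num
  rw [mul_inv, this, inv_I]

lemma msum {s : ℕ} (hs : s ≤ 2*m) :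
    ∑ k ∈ range (2*m), ((-1:ℂ)^k * ((wb m k : ℝ):ℂ))
      * (Complex.exp ((-(m * tb m k) : ℝ) * I) * ub m k ^ s)
    = 4 * m * (I * ((s:ℂ) - m)) := by
  have h1 : ∀ k ∈ range (2*m), ((-1:ℂ)^k * ((wb m k : ℝ):ℂ))
      * (Complex.exp ((-(m * tb m k) : ℝ) * I) * ub m k ^ s)
      = (4 * I) * (ub m k ^ (s+1) / (1 - ub m k)^2) := by
    intro k hk
    rw [mem_range] at hk
    rw [exp_neg_m_tb hm, wb_eq hm hk]
    have hee : ((-1:ℂ)^k) * ((-1:ℂ)^k) = 1 := by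
      rw [← pow_add]
      exact Even.neg_one_pow ⟨k, by ring⟩
    have hune : (1 - ub m k) ≠ 0 := one_sub_ub_ne_zero hm hk
    linear_combination (4 * I * ub m k ^ (s+1) / (1 - ub m k)^2) * hee
  rw [Finset.sum_congr rfl h1, ← Finset.mul_sum]
  have : ∑ k ∈ range (2*m), ub m k ^ (s+1) / (1 - ub m k)^2 = Gb m s := rfl
  rw [this, Gb_val hm hs]
  ring

end Bernstein3

open Polynomial in
theorem bernstein_poly {m : ℕ} (hm : 1 ≤ m) (P : Polynomial ℂ) (hP : P.natDegree ≤ 2*m)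
    (M : ℝ)
    (hM : ∀ θ : ℝ, ‖Complex.exp ((-(m * θ) : ℝ) * I) * P.eval (Complex.exp ((θ:ℝ) * I))‖ ≤ M) :
    ‖P.derivative.eval 1 - (m:ℂ) * P.eval 1‖ ≤ m * M := by
  have hL : P.derivative.eval 1 = ∑ s ∈ range (2*m+1), P.coeff s * s := by
    conv_lhs => rw [P.as_sum_range' (2*m+1) (by omega)]
    rw [derivative_sum, eval_finset_sum]
    refine Finset.sum_congr rfl fun s _ => ?_
    rw [derivative_monomial, Polynomial.eval_monomial, one_pow, mul_one]
  have hE : ∀ z : ℂ, P.eval z = ∑ s ∈ range (2*m+1), P.coeff s * z^s :=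
    fun z => P.eval_eq_sum_range' (by omega) z
  have hkey : (4*(m:ℂ)) * (I * (P.derivative.eval 1 - (m:ℂ) * P.eval 1))
      = ∑ k ∈ range (2*m), ((-1:ℂ)^k * ((wb m k : ℝ):ℂ))
          * (Complex.exp ((-(m * tb m k) : ℝ) * I) * P.eval (ub m k)) := by
    have hR : ∀ k ∈ range (2*m), ((-1:ℂ)^k * ((wb m k : ℝ):ℂ))
        * (Complex.exp ((-(m * tb m k) : ℝ) * I) * P.eval (ub m k))
        = ∑ s ∈ range (2*m+1), P.coeff s *
            (((-1:ℂ)^k * ((wb m k : ℝ):ℂ))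
              * (Complex.exp ((-(m * tb m k) : ℝ) * I) * ub m k ^ s)) := by
      intro k _
      rw [hE (ub m k), Finset.mul_sum]
      rw [Finset.mul_sum]
      refine Finset.sum_congr rfl fun s _ => ?_
      ring
    rw [Finset.sum_congr rfl hR, Finset.sum_comm]
    have hS : ∀ s ∈ range (2*m+1),
        ∑ k ∈ range (2*m), P.coeff s * (((-1:ℂ)^k * ((wb m k : ℝ):ℂ))
          * (Complex.exp ((-(m * tb m k) : ℝ) * I) * ub m k ^ s))
        = P.coeff s * (4 * m * (I * ((s:ℂ) - m))) := by
      intro s hs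
      rw [mem_range] at hs
      rw [← Finset.mul_sum, msum hm (by omega)]
    rw [Finset.sum_congr rfl hS, hL, hE 1]
    simp only [one_pow, mul_one]
    rw [Finset.mul_sum (range (2*m+1)) (fun s => P.coeff s) ((m:ℂ)), ← Finset.sum_sub_distrib,
      Finset.mul_sum, Finset.mul_sum]
    exact Finset.sum_congr rfl fun s _ => by ring
  have hnorm : ‖(4*(m:ℂ)) * (I * (P.derivative.eval 1 - (m:ℂ) * P.eval 1))‖
      = 4*m*‖P.derivative.eval 1 - (m:ℂ) * P.eval 1‖ := by
    simp [norm_mul, Complex.norm_I, Complex.norm_natCast]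
  have hbound : ‖∑ k ∈ range (2*m), ((-1:ℂ)^k * ((wb m k : ℝ):ℂ))
      * (Complex.exp ((-(m * tb m k) : ℝ) * I) * P.eval (ub m k))‖ ≤ 4*m^2*M := by
    refine le_trans (norm_sum_le _ _) ?_
    have hterm : ∀ k ∈ range (2*m), ‖((-1:ℂ)^k * ((wb m k : ℝ):ℂ))
        * (Complex.exp ((-(m * tb m k) : ℝ) * I) * P.eval (ub m k))‖ ≤ wb m k * M := by
      intro k hk
      rw [mem_range] at hk
      rw [norm_mul, norm_mul, norm_pow, norm_neg, norm_one, one_pow, one_mul,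
        Complex.norm_real, Real.norm_eq_abs, abs_of_pos (wb_pos hm hk)]
      exact mul_le_mul_of_nonneg_left (hM (tb m k)) (wb_pos hm hk).le
    refine le_trans (Finset.sum_le_sum hterm) ?_
    rw [← Finset.sum_mul, wb_sum hm]
  rw [hkey] at hnorm
  have h4m : (0:ℝ) < 4*m := by positivity
  have := hnorm ▸ hbound
  nlinarith [this]

end BernsteinCore

section Calc
open MvPolynomial Finset

lemma hasDerivAt_eval_comp {n : ℕ} (Q : MvPolynomial (Fin n) ℝ) (g : Fin n → ℝ → ℝ)
    (g' : Fin n → ℝ) (θ : ℝ) (hg : ∀ i, HasDerivAt (fun t => g i t) (g' i) θ) :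
    HasDerivAt (fun θ' => MvPolynomial.eval (fun i => g i θ') Q)
      (∑ i, g' i * MvPolynomial.eval (fun i => g i θ) (MvPolynomial.pderiv i Q)) θ := by
  induction Q using MvPolynomial.induction_on with
  | C a =>
    simp only [eval_C, pderiv_C, map_zero, eval_zero, mul_zero, Finset.sum_const_zero]
    exact hasDerivAt_const θ a
  | add p q hp hq =>
    have h := hp.add hq
    convert h using 1
    · rfl
    · rfl
    · funext θ'; simp
    · simp [mul_add, Finset.sum_add_distrib]
  | mul_X p i hp =>
    have h := hp.mul (hg i)
    convert h using 1
    · rfl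
    · rfl
    · funext θ'; simp
    · classical
      simp only [pderiv_mul, pderiv_X, map_add, map_mul, eval_X, mul_add, add_mul,
        Finset.sum_add_distrib, Finset.sum_mul]
      congr 1
      · exact Finset.sum_congr rfl fun x _ => by ring
      · rw [Finset.sum_eq_single i (fun w _ hw => by simp [Pi.single_apply, hw]) (by simp)]
        simp
        ring

lemma degree_eq_sum_univ {n : ℕ} (d : Fin n →₀ ℕ) : d.degree = ∑ i, d i := by
  rw [Finsupp.degree]
  exact Finset.sum_subset (Finset.subset_univ _) (fun i _ hi => by
    simpa using Finsupp.notMem_support_iff.mp hi)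

lemma homog_degree_eq {n m : ℕ} {Q : MvPolynomial (Fin n) ℝ} (hQ : Q.IsHomogeneous m)
    {d : Fin n →₀ ℕ} (hd : d ∈ Q.support) : d.degree = m := by
  by_contra h
  exact MvPolynomial.mem_support_iff.mp hd (hQ.coeff_eq_zero h)

lemma euler_monomial {n : ℕ} (d : Fin n →₀ ℕ) (a : ℝ) (i : Fin n) :
    MvPolynomial.X i * MvPolynomial.pderiv i (MvPolynomial.monomial d a)
      = MvPolynomial.monomial d (a * d i) := by
  rw [MvPolynomial.pderiv_monomial]
  rcases Nat.eq_zero_or_pos (d i) with h | h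
  · simp [h]
  · have hle : Finsupp.single i 1 ≤ d := by
      rw [Finsupp.single_le_iff]
      omega
    rw [MvPolynomial.X, MvPolynomial.monomial_mul, add_tsub_cancel_of_le hle, one_mul]

lemma euler {n m : ℕ} {Q : MvPolynomial (Fin n) ℝ} (hQ : Q.IsHomogeneous m) :
    ∑ i, MvPolynomial.X i * MvPolynomial.pderiv i Q = (m : ℝ) • Q := by
  conv_lhs => rw [Q.as_sum]
  conv_rhs => rw [Q.as_sum]
  simp only [map_sum, Finset.mul_sum, Finset.smul_sum]
  rw [Finset.sum_comm]
  refine Finset.sum_congr rfl fun d hd => ?_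
  have hdeg : d.degree = m := homog_degree_eq hQ hd
  rw [Finset.sum_congr rfl fun i _ => euler_monomial d (MvPolynomial.coeff d Q) i]
  rw [← map_sum (MvPolynomial.monomial d) _ Finset.univ, ← Finset.mul_sum]
  rw [MvPolynomial.smul_monomial]
  congr 1
  have : ∑ i, ((d i : ℝ)) = (m:ℝ) := by
    rw [← hdeg, degree_eq_sum_univ]
    push_cast
    ring
  rw [smul_eq_mul, ← this, Finset.mul_sum, Finset.sum_mul]
  exact Finset.sum_congr rfl fun i _ => by ring

lemma eval₂_homog_smul {n m : ℕ} {Q : MvPolynomial (Fin n) ℝ} (hQ : Q.IsHomogeneous m)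
    (f : ℝ →+* ℂ) (z : ℂ) (c : Fin n → ℂ) :
    MvPolynomial.eval₂ f (fun w => z * c w) Q = z^m * MvPolynomial.eval₂ f c Q := by
  rw [MvPolynomial.eval₂_eq, MvPolynomial.eval₂_eq, Finset.mul_sum]
  refine Finset.sum_congr rfl fun d hd => ?_
  have hdeg : d.degree = m := homog_degree_eq hQ hd
  simp_rw [mul_pow]
  rw [Finset.prod_mul_distrib, Finset.prod_pow_eq_pow_sum]
  rw [show ∑ i ∈ d.support, d i = m from hdeg]
  ring

lemma natDegree_eval₂_le {n m : ℕ} {Q : MvPolynomial (Fin n) ℝ} (hQ : Q.IsHomogeneous m)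
    (g : Fin n → Polynomial ℂ) (hg : ∀ i, (g i).natDegree ≤ 2) :
    (MvPolynomial.eval₂ (algebraMap ℝ (Polynomial ℂ)) g Q).natDegree ≤ 2*m := by
  rw [MvPolynomial.eval₂_eq]
  apply Polynomial.natDegree_sum_le_of_forall_le
  intro d hd
  have hdeg : d.degree = m := homog_degree_eq hQ hd
  refine le_trans (Polynomial.natDegree_mul_le) ?_
  have h1 : (algebraMap ℝ (Polynomial ℂ) (MvPolynomial.coeff d Q)).natDegree = 0 := by
    rw [Polynomial.algebraMap_apply]
    exact Polynomial.natDegree_C _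
  rw [h1, zero_add]
  refine le_trans (Polynomial.natDegree_prod_le _ _) ?_
  calc ∑ i ∈ d.support, ((g i)^(d i)).natDegree
      ≤ ∑ i ∈ d.support, 2 * d i := by
        refine Finset.sum_le_sum fun i _ => ?_
        refine le_trans Polynomial.natDegree_pow_le ?_
        calc d i * (g i).natDegree ≤ d i * 2 := by
              exact Nat.mul_le_mul_left _ (hg i)
          _ = 2 * d i := by ring
    _ = 2 * m := by rw [← Finset.mul_sum, ← hdeg, Finsupp.degree]; rfl

end Calc

section Sup
open MvPolynomial Finset



section SupSphere
variable {n : ℕ} (Q : MvPolynomial (Fin n) ℝ)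

lemma sphere_ne (hn : 1 ≤ n) :
    Nonempty (Metric.sphere (0 : EuclideanSpace ℝ (Fin n)) 1) := by
  refine ⟨⟨EuclideanSpace.single (⟨0, hn⟩ : Fin n) (1:ℝ), ?_⟩⟩
  rw [mem_sphere_zero_iff_norm, EuclideanSpace.norm_single]
  norm_num

lemma continuous_evalE :
    Continuous fun x : EuclideanSpace ℝ (Fin n) => |MvPolynomial.eval (fun i => x i) Q| := by
  apply Continuous.abs
  exact (MvPolynomial.continuous_eval Q).comp (continuous_pi fun i =>
    (EuclideanSpace.proj i).continuous)

lemma bddAbove_evalE :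
    BddAbove (Set.range fun x : Metric.sphere (0 : EuclideanSpace ℝ (Fin n)) 1 =>
      |MvPolynomial.eval (fun i => (x : EuclideanSpace ℝ (Fin n)) i) Q|) := by
  have hcomp : IsCompact (Metric.sphere (0 : EuclideanSpace ℝ (Fin n)) 1) :=
    isCompact_sphere _ _
  have h := hcomp.bddAbove_image (continuous_evalE Q).continuousOn
  rwa [Set.image_eq_range] at h

lemma supSphere_nonneg : 0 ≤ supSphere n Q :=
  Real.iSup_nonneg fun x => abs_nonneg _

lemma norm_one_of_sum_sq {y : Fin n → ℝ} (hy : ∑ i, y i ^ 2 = 1) :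
    ‖(WithLp.equiv 2 (Fin n → ℝ)).symm y‖ = 1 := by
  rw [EuclideanSpace.norm_eq]
  have : ∀ i, ‖(WithLp.equiv 2 (Fin n → ℝ)).symm y i‖ ^ 2 = y i ^ 2 := by
    intro i
    rw [show ((WithLp.equiv 2 (Fin n → ℝ)).symm y) i = y i from rfl, Real.norm_eq_abs, sq_abs]
  rw [Finset.sum_congr rfl fun i _ => this i, hy, Real.sqrt_one]

lemma le_supSphere (y : Fin n → ℝ) (hy : ∑ i, y i ^ 2 = 1) :
    |MvPolynomial.eval y Q| ≤ supSphere n Q := by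
  have hx : (WithLp.equiv 2 (Fin n → ℝ)).symm y ∈ Metric.sphere (0 : EuclideanSpace ℝ (Fin n)) 1 := by
    rw [mem_sphere_zero_iff_norm]
    exact norm_one_of_sum_sq hy
  have h := le_ciSup (bddAbove_evalE Q) (⟨_, hx⟩ : Metric.sphere (0 : EuclideanSpace ℝ (Fin n)) 1)
  exact h

lemma supSphere_le (hn : 1 ≤ n) {B : ℝ}
    (hB : ∀ y : Fin n → ℝ, ∑ i, y i ^ 2 = 1 → |MvPolynomial.eval y Q| ≤ B) :
    supSphere n Q ≤ B := by
  have := sphere_ne (n := n) hn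
  refine ciSup_le fun x => ?_
  apply hB
  have hx := x.2
  rw [mem_sphere_zero_iff_norm, EuclideanSpace.norm_eq] at hx
  have h2 : ∑ i, ‖(x : EuclideanSpace ℝ (Fin n)) i‖^2 = 1 := by
    have hnn : (0:ℝ) ≤ ∑ i, ‖(x : EuclideanSpace ℝ (Fin n)) i‖^2 :=
      Finset.sum_nonneg fun i _ => sq_nonneg _
    nlinarith [Real.sq_sqrt hnn, hx]
  calc ∑ i, (x : EuclideanSpace ℝ (Fin n)) i ^ 2
      = ∑ i, ‖(x : EuclideanSpace ℝ (Fin n)) i‖^2 := by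
        exact Finset.sum_congr rfl fun i _ => by rw [Real.norm_eq_abs, sq_abs]
    _ = 1 := h2

end SupSphere

lemma pderiv_isHomogeneous {n m : ℕ} {Q : MvPolynomial (Fin n) ℝ} (hQ : Q.IsHomogeneous m)
    (i : Fin n) : (MvPolynomial.pderiv i Q).IsHomogeneous (m - 1) := by
  conv_lhs => rw [Q.as_sum]
  rw [map_sum]
  apply MvPolynomial.IsHomogeneous.sum
  intro d hd
  rw [MvPolynomial.pderiv_monomial]
  rcases Nat.eq_zero_or_pos (d i) with h | h
  · rw [h]
    simp only [Nat.cast_zero, mul_zero, map_zero]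
    exact MvPolynomial.isHomogeneous_zero _ _ _
  · apply MvPolynomial.isHomogeneous_monomial
    have hdeg : d.degree = m := by
      by_contra hcon
      exact MvPolynomial.mem_support_iff.mp hd (hQ.coeff_eq_zero hcon)
    have hsum : ∑ w ∈ Finset.univ.erase i, d w + d i = m := by
      rw [Finset.sum_erase_add _ _ (Finset.mem_univ i), ← degree_eq_sum_univ, hdeg]
    have h2 : (d - Finsupp.single i 1).degree
        = ∑ w ∈ Finset.univ.erase i, d w + (d i - 1) := by
      rw [degree_eq_sum_univ, ← Finset.sum_erase_add _ _ (Finset.mem_univ i)]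
      congr 1
      · refine Finset.sum_congr rfl fun w hw => ?_
        rw [Finsupp.tsub_apply, Finsupp.single_eq_of_ne' (Finset.ne_of_mem_erase hw).symm]
        rfl
      · rw [Finsupp.tsub_apply, Finsupp.single_eq_same]
    omega

end Sup

section Main
open MvPolynomial Finset Complex
lemma tangential {n m : ℕ} (hm : 1 ≤ m) {Q : MvPolynomial (Fin n) ℝ} (hQ : Q.IsHomogeneous m)
    (M : ℝ) (hsup : ∀ y : Fin n → ℝ, ∑ w, y w ^ 2 = 1 → |MvPolynomial.eval y Q| ≤ M)
    (x v : Fin n → ℝ) (hx : ∑ w, x w ^ 2 = 1) (hv : ∑ w, v w ^ 2 = 1)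
    (hxv : ∑ w, x w * v w = 0) :
    |∑ w, v w * MvPolynomial.eval x (MvPolynomial.pderiv w Q)| ≤ m * M := by
  classical
  set α : Fin n → ℂ := fun w => ((x w : ℂ) - Complex.I * v w) / 2 with hα
  set β : Fin n → ℂ := fun w => ((x w : ℂ) + Complex.I * v w) / 2 with hβ
  set g : Fin n → Polynomial ℂ :=
    fun w => Polynomial.C (α w) * Polynomial.X^2 + Polynomial.C (β w) with hgdef
  set P : Polynomial ℂ := MvPolynomial.eval₂ (algebraMap ℝ (Polynomial ℂ)) g Q with hPdef
  have hdeg : P.natDegree ≤ 2*m := by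
    apply natDegree_eval₂_le hQ
    intro i
    refine le_trans (Polynomial.natDegree_add_le _ _) ?_
    simp only [Polynomial.natDegree_C]
    refine max_le (le_trans (Polynomial.natDegree_mul_le) ?_) (by omega)
    simp [Polynomial.natDegree_X_pow]
  set y : ℝ → Fin n → ℝ := fun θ w => Real.cos θ * x w + Real.sin θ * v w with hydef
  have hy1 : ∀ θ, ∑ w, y θ w ^ 2 = 1 := by
    intro θ
    have hexp : ∑ w, y θ w ^ 2
        = Real.cos θ^2 * ∑ w, x w^2 + 2*(Real.cos θ*Real.sin θ) * (∑ w, x w * v w)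
          + Real.sin θ^2 * ∑ w, v w^2 := by
      rw [Finset.mul_sum, Finset.mul_sum, Finset.mul_sum, ← Finset.sum_add_distrib,
        ← Finset.sum_add_distrib]
      exact Finset.sum_congr rfl fun w _ => by rw [hydef]; ring
    rw [hexp, hx, hv, hxv]
    have := Real.sin_sq_add_cos_sq θ
    nlinarith [this]
  -- the key pointwise identity
  have hval : ∀ θ : ℝ, Complex.exp ((-(m * θ) : ℝ) * I) * P.eval (Complex.exp ((θ:ℝ) * I))
      = ((MvPolynomial.eval (y θ) Q : ℝ) : ℂ) := by
    intro θ
    set z : ℂ := Complex.exp ((θ:ℝ) * I) with hz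
    have hz0 : z ≠ 0 := Complex.exp_ne_zero _
    have hPz : P.eval z = MvPolynomial.eval₂ (Complex.ofRealHom) (fun w => α w * z^2 + β w) Q := by
      rw [hPdef]
      have h1 := MvPolynomial.eval₂_comp_left (Polynomial.evalRingHom z)
        (algebraMap ℝ (Polynomial ℂ)) g Q
      have h2 : (Polynomial.evalRingHom z).comp (algebraMap ℝ (Polynomial ℂ))
          = Complex.ofRealHom := by
        refine RingHom.ext fun r => ?_
        simp [Polynomial.algebraMap_apply]
      have h3 : (⇑(Polynomial.evalRingHom z) ∘ g) = fun w => α w * z^2 + β w := by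
        funext w
        simp [hgdef]
      rw [h2, h3] at h1
      exact h1
    have hzc : z = Complex.cos θ + Complex.sin θ * I := by rw [hz, Complex.exp_mul_I]
    have hzinv : z⁻¹ = Complex.cos θ - Complex.sin θ * I := by
      rw [hz, ← Complex.exp_neg]
      have harg : -((θ:ℂ) * I) = ((-θ : ℝ) : ℂ) * I := by push_cast; ring
      rw [harg, Complex.exp_mul_I, Complex.ofReal_neg, Complex.cos_neg, Complex.sin_neg]
      ring
    have hfac : ∀ w, α w * z^2 + β w = z * ((y θ w : ℝ) : ℂ) := by
      intro w
      have hzz : z * z⁻¹ = 1 := mul_inv_cancel₀ hz0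
      have hstep : α w * z^2 + β w = z * (α w * z + β w * z⁻¹) := by
        field_simp
      rw [hstep]
      congr 1
      rw [hzinv, hzc, hα, hβ, hydef]
      push_cast
      linear_combination (-(v w : ℂ) * Complex.sin θ) * Complex.I_sq
    have hsc := eval₂_homog_smul hQ Complex.ofRealHom z (fun w => ((y θ w : ℝ) : ℂ))
    have hreal : MvPolynomial.eval₂ Complex.ofRealHom (fun w => ((y θ w : ℝ):ℂ)) Q
        = ((MvPolynomial.eval (y θ) Q : ℝ) : ℂ) := by
      have h1 := MvPolynomial.eval₂_comp_left Complex.ofRealHom (RingHom.id ℝ) (y θ) Q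
      rw [RingHom.comp_id] at h1
      have hcoe : (fun w => ((y θ w : ℝ) : ℂ)) = (⇑Complex.ofRealHom ∘ y θ) := by
        funext w
        simp
      rw [hcoe, ← h1, MvPolynomial.eval₂_id]
      simp
    have hzm : z ^ m = Complex.exp ((m * θ : ℝ) * I) := by
      rw [hz, ← Complex.exp_nat_mul]
      congr 1
      push_cast
      ring
    rw [hPz]
    have h5 : (fun w => α w * z^2 + β w) = fun w => z * ((y θ w : ℝ) : ℂ) := funext hfac
    rw [h5, hsc, hreal, hzm, ← mul_assoc, ← Complex.exp_add]
    have h6 : ((-(m * θ) : ℝ) : ℂ) * I + ((m * θ : ℝ) : ℂ) * I = 0 := by push_cast; ring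
    rw [h6, Complex.exp_zero, one_mul]
  have hMb : ∀ θ : ℝ, ‖Complex.exp ((-(m * θ) : ℝ) * I) * P.eval (Complex.exp ((θ:ℝ) * I))‖ ≤ M := by
    intro θ
    rw [hval θ, Complex.norm_real, Real.norm_eq_abs]
    exact hsup (y θ) (hy1 θ)
  have hbern := bernstein_poly hm P hdeg M hMb
  -- derivative computations
  have hgw : ∀ w, HasDerivAt (fun θ : ℝ => Real.cos θ * x w + Real.sin θ * v w) (v w) 0 := by
    intro w
    have h1 := (Real.hasDerivAt_cos 0).mul_const (x w)
    have h2 := (Real.hasDerivAt_sin 0).mul_const (v w)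
    have h3 := h1.add h2
    simpa [Pi.add_def] using h3
  have hder1 : HasDerivAt (fun θ => MvPolynomial.eval (y θ) Q)
      (∑ w, v w * MvPolynomial.eval x (MvPolynomial.pderiv w Q)) 0 := by
    have h := hasDerivAt_eval_comp Q (fun w θ => Real.cos θ * x w + Real.sin θ * v w)
      v 0 hgw
    have hx0 : (fun w => Real.cos 0 * x w + Real.sin 0 * v w) = x := by
      funext w; simp
    rw [hx0] at h
    exact h
  have hder2 : HasDerivAt (fun θ : ℝ =>
        Complex.exp ((-(m * θ) : ℝ) * I) * P.eval (Complex.exp ((θ:ℝ) * I)))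
      (I * (P.derivative.eval 1 - (m:ℂ) * P.eval 1)) 0 := by
    have h1 : HasDerivAt (fun ζ : ℂ => Complex.exp (-(m:ℂ) * ζ * I)) (-(m:ℂ) * I) 0 := by
      have h0 : HasDerivAt (fun ζ : ℂ => (-(m:ℂ) * I) * ζ) (-(m:ℂ) * I) 0 := by
        simpa using (hasDerivAt_id (0:ℂ)).const_mul (-(m:ℂ) * I)
      have := h0.cexp
      simp only [mul_zero, Complex.exp_zero, one_mul] at this
      convert this using 2 with ζ
      · rfl
      · ring
    have h2 : HasDerivAt (fun ζ : ℂ => P.eval (Complex.exp (ζ * I)))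
        (P.derivative.eval 1 * I) 0 := by
      have hin : HasDerivAt (fun ζ : ℂ => Complex.exp (ζ * I)) (I) 0 := by
        have h0 : HasDerivAt (fun ζ : ℂ => ζ * I) (I) 0 := by
          simpa using (hasDerivAt_id (0:ℂ)).mul_const I
        have := h0.cexp
        simpa using this
      have hout := P.hasDerivAt (Complex.exp ((0:ℂ) * I))
      have := hout.comp 0 hin
      simpa [Function.comp_def] using this
    have hprod := h1.mul h2
    simp only [Pi.mul_def, mul_zero, zero_mul, Complex.exp_zero, Polynomial.eval_one] at hprod
    have hR := hprod.comp_ofReal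
    have hfun : (fun θ : ℝ => Complex.exp (-(m:ℂ) * (θ:ℂ) * I) * P.eval (Complex.exp ((θ:ℂ) * I)))
        = fun θ : ℝ => Complex.exp ((-(m * θ) : ℝ) * I) * P.eval (Complex.exp ((θ:ℝ) * I)) := by
      funext θ
      push_cast
      ring_nf
    rw [hfun] at hR
    convert hR using 1
    ring
  have hder1' := hder1.ofReal_comp
  have hfeq : (fun θ : ℝ => ((MvPolynomial.eval (y θ) Q : ℝ) : ℂ))
      = fun θ : ℝ => Complex.exp ((-(m * θ) : ℝ) * I) * P.eval (Complex.exp ((θ:ℝ) * I)) := by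
    funext θ
    rw [hval θ]
  rw [hfeq] at hder1'
  have huniq := hder1'.unique hder2
  have habs : |∑ w, v w * MvPolynomial.eval x (MvPolynomial.pderiv w Q)|
      = ‖I * (P.derivative.eval 1 - (m:ℂ) * P.eval 1)‖ := by
    rw [← huniq, Complex.norm_real, Real.norm_eq_abs]
  rw [habs, norm_mul, Complex.norm_I, one_mul]
  exact hbern

end Main
section Step
open MvPolynomial Finset

lemma supSphere_zero_poly {n : ℕ} (hn : 1 ≤ n) : supSphere n 0 = 0 := by
  have := sphere_ne hn
  rw [supSphere]
  simp [ciSup_const]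

lemma step {n m : ℕ} (hn : 1 ≤ n) {Q : MvPolynomial (Fin n) ℝ} (hQ : Q.IsHomogeneous m)
    (i : Fin n) :
    supSphere n (MvPolynomial.pderiv i Q) ≤ Real.sqrt 2 * m * supSphere n Q := by
  classical
  rcases Nat.eq_zero_or_pos m with hm0 | hm
  · subst hm0
    have hz : MvPolynomial.pderiv i Q = 0 := by
      conv_lhs => rw [Q.as_sum]
      rw [map_sum]
      apply Finset.sum_eq_zero
      intro d hd
      rw [MvPolynomial.pderiv_monomial]
      have hdi : d i = 0 := by
        have hdeg : d.degree = 0 := homog_degree_eq hQ hd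
        have hle := Finsupp.le_degree i d
        omega
      simp [hdi]
    rw [hz, supSphere_zero_poly hn]
    simp [supSphere_nonneg]
  · set M := supSphere n Q with hMdef
    have hM0 : 0 ≤ M := supSphere_nonneg Q
    apply supSphere_le _ hn
    intro x hx
    set c : ℝ := x i with hcdef
    set u : Fin n → ℝ := fun w => (if w = i then (1:ℝ) else 0) - c * x w with hu
    have hc2 : c^2 ≤ 1 := by
      have h1 := Finset.single_le_sum (f := fun w => x w^2) (fun w _ => sq_nonneg _)
        (Finset.mem_univ i)
      rw [hx] at h1
      exact h1
    have hite : ∀ f : Fin n → ℝ, ∑ w, (if w = i then (1:ℝ) else 0) * f w = f i := by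
      intro f
      rw [Finset.sum_eq_single i (fun w _ hw => by simp [hw]) (by simp)]
      simp
    have hxu : ∑ w, x w * u w = 0 := by
      have : ∀ w, x w * u w = (if w = i then (1:ℝ) else 0) * x w - c * (x w^2) := by
        intro w
        rw [hu]
        by_cases h : w = i <;> simp [h] <;> ring
      rw [Finset.sum_congr rfl fun w _ => this w, Finset.sum_sub_distrib, hite,
        ← Finset.mul_sum, hx]
      rw [hcdef]
      ring
    have huu : ∑ w, u w^2 = 1 - c^2 := by
      have : ∀ w, u w^2 = (if w = i then (1:ℝ) else 0) * (if w = i then (1:ℝ) else 0)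
          - 2 * c * ((if w = i then (1:ℝ) else 0) * x w) + c^2 * x w^2 := by
        intro w
        rw [hu]
        by_cases h : w = i <;> simp [h] <;> ring
      rw [Finset.sum_congr rfl fun w _ => this w]
      rw [Finset.sum_add_distrib, Finset.sum_sub_distrib]
      rw [← Finset.mul_sum, ← Finset.mul_sum, hite, hite, hx]
      simp [hcdef]
      ring
    have heuler : ∑ w, x w * MvPolynomial.eval x (MvPolynomial.pderiv w Q)
        = m * MvPolynomial.eval x Q := by
      have h := congrArg (MvPolynomial.eval x) (euler hQ)
      rw [map_sum] at h
      simp only [map_mul, MvPolynomial.eval_X, MvPolynomial.smul_eq_C_mul, MvPolynomial.eval_C] at h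
      simpa using h
    have hdecomp : MvPolynomial.eval x (MvPolynomial.pderiv i Q)
        = c * (m * MvPolynomial.eval x Q) + ∑ w, u w * MvPolynomial.eval x (MvPolynomial.pderiv w Q) := by
      rw [← heuler, Finset.mul_sum, ← Finset.sum_add_distrib]
      have h0 : MvPolynomial.eval x (MvPolynomial.pderiv i Q)
          = ∑ w, (if w = i then (1:ℝ) else 0) * MvPolynomial.eval x (MvPolynomial.pderiv w Q) :=
        (hite (fun w => MvPolynomial.eval x (MvPolynomial.pderiv w Q))).symm
      rw [h0]
      refine Finset.sum_congr rfl fun w _ => ?_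
      rw [hu]
      ring
    have htang : |∑ w, u w * MvPolynomial.eval x (MvPolynomial.pderiv w Q)|
        ≤ Real.sqrt (1 - c^2) * (m * M) := by
      set s : ℝ := Real.sqrt (1 - c^2) with hsdef
      rcases eq_or_ne s 0 with hs0 | hs0
      · have h1c : 1 - c^2 = 0 := by
          have := Real.sqrt_eq_zero (by nlinarith) |>.mp hs0
          linarith [this]
        have hu0 : ∀ w, u w = 0 := by
          intro w
          have hz := huu.trans h1c
          have := (Finset.sum_eq_zero_iff_of_nonneg (fun w _ => sq_nonneg (u w))).mp hz w
            (Finset.mem_univ w)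
          exact pow_eq_zero_iff (by norm_num) |>.mp this
        rw [Finset.sum_eq_zero fun w _ => by rw [hu0 w, zero_mul], abs_zero]
        exact mul_nonneg (Real.sqrt_nonneg _) (mul_nonneg (by positivity) hM0)
      · have hspos : 0 < s := lt_of_le_of_ne (Real.sqrt_nonneg _) (Ne.symm hs0)
        have h1c : 0 ≤ 1 - c^2 := by nlinarith
        have hs2 : s^2 = 1 - c^2 := Real.sq_sqrt h1c
        set v : Fin n → ℝ := fun w => u w / s with hv
        have hv2 : ∑ w, v w^2 = 1 := by
          have : ∀ w, v w^2 = u w^2 / s^2 := fun w => by rw [hv]; ring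
          rw [Finset.sum_congr rfl fun w _ => this w, ← Finset.sum_div, huu, hs2]
          exact div_self (by nlinarith)
        have hxv : ∑ w, x w * v w = 0 := by
          have : ∀ w, x w * v w = (x w * u w) / s := fun w => by rw [hv]; ring
          rw [Finset.sum_congr rfl fun w _ => this w, ← Finset.sum_div, hxu, zero_div]
        have hsupQ : ∀ y : Fin n → ℝ, ∑ w, y w ^ 2 = 1 → |MvPolynomial.eval y Q| ≤ M :=
          fun y hy => le_supSphere Q y hy
        have htan := tangential hm hQ M hsupQ x v hx hv2 hxv
        have hud : ∑ w, u w * MvPolynomial.eval x (MvPolynomial.pderiv w Q)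
            = s * ∑ w, v w * MvPolynomial.eval x (MvPolynomial.pderiv w Q) := by
          rw [Finset.mul_sum]
          refine Finset.sum_congr rfl fun w _ => ?_
          rw [hv]
          field_simp
        rw [hud, abs_mul, abs_of_pos hspos]
        exact mul_le_mul_of_nonneg_left htan hspos.le
    have hQx : |MvPolynomial.eval x Q| ≤ M := le_supSphere Q x hx
    have hfinal : |MvPolynomial.eval x (MvPolynomial.pderiv i Q)|
        ≤ |c| * (m*M) + Real.sqrt (1-c^2) * (m*M) := by
      rw [hdecomp]
      refine le_trans (abs_add_le _ _) (add_le_add ?_ htang)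
      rw [abs_mul, abs_mul]
      have : |(m:ℝ)| * |MvPolynomial.eval x Q| ≤ m * M := by
        rw [abs_of_nonneg (by positivity : (0:ℝ) ≤ (m:ℝ))]
        exact mul_le_mul_of_nonneg_left hQx (by positivity)
      exact mul_le_mul_of_nonneg_left this (abs_nonneg c)
    refine le_trans hfinal ?_
    have hkey : |c| + Real.sqrt (1-c^2) ≤ Real.sqrt 2 := by
      have h1c : 0 ≤ 1 - c^2 := by nlinarith
      have hrt := Real.sq_sqrt h1c
      have hrtn := Real.sqrt_nonneg (1-c^2)
      have h1 : (|c| + Real.sqrt (1-c^2))^2 ≤ 2 := by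
        nlinarith [sq_abs c, sq_nonneg (|c| - Real.sqrt (1-c^2))]
      calc |c| + Real.sqrt (1-c^2)
          = Real.sqrt ((|c| + Real.sqrt (1-c^2))^2) := (Real.sqrt_sq (by positivity)).symm
        _ ≤ Real.sqrt 2 := Real.sqrt_le_sqrt h1
    calc (|c|) * (m*M) + Real.sqrt (1-c^2)*(m*M) = (|c| + Real.sqrt (1-c^2))*(m*M) := by ring
      _ ≤ Real.sqrt 2 * (m*M) := mul_le_mul_of_nonneg_right hkey (by positivity)
      _ = Real.sqrt 2 * m * M := by ring

end Step
section Iter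
open MvPolynomial Finset

lemma pow_step {n : ℕ} (hn : 1 ≤ n) (j : ℕ) (i : Fin n) :
    ∀ (k m : ℕ) (Q : MvPolynomial (Fin n) ℝ), Q.IsHomogeneous m → m ≤ j →
    ((((MvPolynomial.pderiv (R := ℝ) i).toLinearMap ^ k) Q).IsHomogeneous (m - k) ∧
    supSphere n (((MvPolynomial.pderiv (R := ℝ) i).toLinearMap ^ k) Q)
      ≤ (Real.sqrt 2 * j)^k * supSphere n Q) := by
  intro k
  induction k with
  | zero =>
    intro m Q hQ hmj
    constructor
    · simpa using hQ
    · simp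
  | succ k ih =>
    intro m Q hQ hmj
    have hstep1 : (((MvPolynomial.pderiv (R := ℝ) i).toLinearMap ^ (k+1))) Q
        = ((MvPolynomial.pderiv (R := ℝ) i).toLinearMap ^ k) (MvPolynomial.pderiv i Q) := by
      rw [pow_succ, Module.End.mul_apply]
      rfl
    have hQ' : (MvPolynomial.pderiv i Q).IsHomogeneous (m - 1) := pderiv_isHomogeneous hQ i
    obtain ⟨ih1, ih2⟩ := ih (m-1) (MvPolynomial.pderiv i Q) hQ' (by omega)
    constructor
    · rw [hstep1, show m - (k+1) = m - 1 - k from by omega]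
      exact ih1
    · rw [hstep1]
      refine le_trans ih2 ?_
      have hb := step hn hQ i
      have hQ0 := supSphere_nonneg Q
      have h2 : (Real.sqrt 2 * j)^k * supSphere n (MvPolynomial.pderiv i Q)
          ≤ (Real.sqrt 2 * j)^k * (Real.sqrt 2 * m * supSphere n Q) :=
        mul_le_mul_of_nonneg_left hb (by positivity)
      refine le_trans h2 ?_
      have hmj' : Real.sqrt 2 * m * supSphere n Q ≤ Real.sqrt 2 * j * supSphere n Q := by
        have hmr : (m:ℝ) ≤ j := by exact_mod_cast hmj
        exact mul_le_mul_of_nonneg_right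
          (mul_le_mul_of_nonneg_left hmr (Real.sqrt_nonneg 2)) hQ0
      calc (Real.sqrt 2 * j)^k * (Real.sqrt 2 * m * supSphere n Q)
          ≤ (Real.sqrt 2 * j)^k * (Real.sqrt 2 * j * supSphere n Q) :=
            mul_le_mul_of_nonneg_left hmj' (by positivity)
        _ = (Real.sqrt 2 * j)^(k+1) * supSphere n Q := by ring

lemma list_step {n : ℕ} (hn : 1 ≤ n) (j : ℕ) (β : Fin n → ℕ) :
    ∀ (l : List (Fin n)) (m : ℕ) (Q : MvPolynomial (Fin n) ℝ), Q.IsHomogeneous m → m ≤ j →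
    (((l.map fun i => ((MvPolynomial.pderiv (R := ℝ) i).toLinearMap ^ (β i))).prod Q).IsHomogeneous
        (m - (l.map β).sum) ∧
    supSphere n ((l.map fun i => ((MvPolynomial.pderiv (R := ℝ) i).toLinearMap ^ (β i))).prod Q)
      ≤ (Real.sqrt 2 * j)^((l.map β).sum) * supSphere n Q) := by
  intro l
  induction l with
  | nil =>
    intro m Q hQ hmj
    constructor
    · simpa using hQ
    · simp
  | cons a l ih =>
    intro m Q hQ hmj
    have hfold : ((List.map (fun i => (MvPolynomial.pderiv (R := ℝ) i).toLinearMap ^ β i) (a :: l)).prod) Q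
        = ((MvPolynomial.pderiv (R := ℝ) a).toLinearMap ^ β a)
            (((List.map (fun i => (MvPolynomial.pderiv (R := ℝ) i).toLinearMap ^ β i) l).prod) Q) := by
      rw [List.map_cons, List.prod_cons, Module.End.mul_apply]
    obtain ⟨ih1, ih2⟩ := ih m Q hQ hmj
    obtain ⟨p1, p2⟩ := pow_step hn j a (β a) (m - (l.map β).sum) _ ih1 (by omega)
    constructor
    · rw [hfold, show m - ((List.map β (a::l)).sum) = m - (List.map β l).sum - β a from by
        rw [List.map_cons, List.sum_cons]; omega]
      exact p1
    · rw [hfold]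
      refine le_trans p2 ?_
      have h3 : (Real.sqrt 2 * j)^(β a) * supSphere n
            (((List.map (fun i => (MvPolynomial.pderiv (R := ℝ) i).toLinearMap ^ β i) l).prod) Q)
          ≤ (Real.sqrt 2 * j)^(β a) * ((Real.sqrt 2 * j)^((l.map β).sum) * supSphere n Q) :=
        mul_le_mul_of_nonneg_left ih2 (by positivity)
      refine le_trans h3 ?_
      rw [List.map_cons, List.sum_cons, pow_add]
      ring_nf
      exact le_refl _

end Iter

/-- For every solid harmonic `Q_j` of degree `j` on `ℝ^n` (`n ≥ 2`) and
every nonzero multi-index `α`,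
`‖∂^α Q_j‖_{L^∞(S^{n-1})} ≤ e^{n/4−1/2}·√n·2^{|α|/2}·j^{|α|+n/2−1}·‖Q_j‖_{L^∞(S^{n-1})}`. -/
theorem stmt9 (n j : ℕ) (hn : 2 ≤ n) (Q : MvPolynomial (Fin n) ℝ)
    (hhom : Q.IsHomogeneous j)
    (hharm : (∑ i : Fin n, pderiv i (pderiv i Q)) = 0)
    (α : Fin n → ℕ) (hα : α ≠ 0) :
    supSphere n (pderivMulti n α Q) ≤
      Real.exp ((n : ℝ) / 4 - 1 / 2) * Real.sqrt n * (2 : ℝ) ^ (((∑ i, α i : ℕ) : ℝ) / 2) *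
        (j : ℝ) ^ (((∑ i, α i : ℕ) : ℝ) + (n : ℝ) / 2 - 1) * supSphere n Q := by
  classical
  set a : ℕ := ∑ i, α i with ha
  have ha1 : 1 ≤ a := by
    rcases Nat.eq_zero_or_pos a with h0 | h
    · exfalso
      apply hα
      funext i
      have := (Finset.sum_eq_zero_iff.mp (ha ▸ h0 : (∑ i, α i) = 0)) i (Finset.mem_univ i)
      simpa using this
    · exact h
  have hn1 : 1 ≤ n := by omega
  have hsum : ((List.finRange n).map α).sum = a := by
    rw [ha, Fin.sum_univ_def]
  obtain ⟨h1, h2⟩ := list_step hn1 j α (List.finRange n) j Q hhom le_rfl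
  rw [hsum] at h2
  have hpm : supSphere n (pderivMulti n α Q) = supSphere n
      (((List.finRange n).map fun i => ((MvPolynomial.pderiv (R := ℝ) i).toLinearMap ^ (α i))).prod Q) := rfl
  rw [hpm]
  refine le_trans h2 ?_
  set M := supSphere n Q with hMdef
  have hM0 : 0 ≤ M := supSphere_nonneg Q
  rcases Nat.eq_zero_or_pos j with hj0 | hj
  · subst hj0
    have hz : (Real.sqrt 2 * (0:ℕ))^a = 0 := by
      simp [zero_pow (by omega : a ≠ 0)]
    rw [hz, zero_mul]
    positivity
  · have hj1 : (1:ℝ) ≤ (j:ℝ) := by exact_mod_cast hj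
    have e1 : (Real.sqrt 2 * j)^a = (2:ℝ)^((a:ℝ)/2) * (j:ℝ)^(a:ℕ) := by
      rw [mul_pow]
      congr 1
      rw [Real.sqrt_eq_rpow, ← Real.rpow_natCast ((2:ℝ)^((1:ℝ)/2)) a,
        ← Real.rpow_mul (by norm_num)]
      congr 1
      ring
    have e2 : (j:ℝ)^(((a:ℕ):ℝ) + (n:ℝ)/2 - 1)
        = (j:ℝ)^(a:ℕ) * (j:ℝ)^((n:ℝ)/2 - 1) := by
      rw [show ((a:ℕ):ℝ) + (n:ℝ)/2 - 1 = ((a:ℕ):ℝ) + ((n:ℝ)/2 - 1) from by ring,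
        Real.rpow_add (by positivity), Real.rpow_natCast]
    have e4 : (1:ℝ) ≤ (j:ℝ)^((n:ℝ)/2 - 1) := by
      apply Real.one_le_rpow hj1
      have : (2:ℝ) ≤ (n:ℝ) := by exact_mod_cast hn
      linarith
    have e5 : (1:ℝ) ≤ Real.exp ((n:ℝ)/4 - 1/2) := by
      apply Real.one_le_exp
      have : (2:ℝ) ≤ (n:ℝ) := by exact_mod_cast hn
      linarith
    have e6 : (1:ℝ) ≤ Real.sqrt n := by
      rw [show (1:ℝ) = Real.sqrt 1 from Real.sqrt_one.symm]
      apply Real.sqrt_le_sqrt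
      exact_mod_cast hn1
    rw [e1, e2]
    have h2pos : (0:ℝ) < (2:ℝ)^((a:ℝ)/2) := Real.rpow_pos_of_pos (by norm_num) _
    calc (2:ℝ)^((a:ℝ)/2) * (j:ℝ)^(a:ℕ) * M
        = 1 * 1 * ((2:ℝ)^((a:ℝ)/2) * ((j:ℝ)^(a:ℕ) * 1) * M) := by ring
      _ ≤ Real.exp ((n:ℝ)/4 - 1/2) * Real.sqrt n *
            ((2:ℝ)^((a:ℝ)/2) * ((j:ℝ)^(a:ℕ) * (j:ℝ)^((n:ℝ)/2 - 1)) * M) := by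
          gcongr
      _ = Real.exp ((n:ℝ)/4 - 1/2) * Real.sqrt n * (2:ℝ)^((a:ℝ)/2) *
            ((j:ℝ)^(a:ℕ) * (j:ℝ)^((n:ℝ)/2 - 1)) * M := by ring
end

section
/- Let M_p be a weight sequence satisfying (M.1)* (i.e., M_p/p! is logarithmically convex) and (M.2): M_{p+q} ≤ A·H^{p+q}·M_p·M_q. Then there exist constants L, ℓ > 0 such that inf_{y>0} (M*(1/y) + t·y) ≤ M(ℓt) + log L for all t > 0, where M is the associated function of M_p and M* is the associated function of M_p/p!. -/
/-- Petzsche–Vogt: Let `M_p` satisfy (M.1)* (`M_p/p!` is logarithmically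
convex) and (M.2) (`M_{p+q} ≤ A·H^{p+q}·M_p·M_q`).  Then there are `L, ℓ > 0` such that
`inf_{y>0} (M*(1/y) + t·y) ≤ M(ℓt) + log L` for all `t > 0` (written in exponential form:
`inf_{y>0} e^{M*(1/y)}·e^{ty} ≤ L·e^{M(ℓt)}`). -/
theorem stmt13 (M : ℕ → ℝ) (hMpos : ∀ p, 0 < M p) (hM0 : M 0 = 1)
    (hM1star : ∀ p : ℕ, 1 ≤ p →
      (M p / Nat.factorial p) ^ 2 ≤
        (M (p - 1) / Nat.factorial (p - 1)) * (M (p + 1) / Nat.factorial (p + 1)))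
    (A H : ℝ) (hA : 1 ≤ A) (hH : 1 ≤ H)
    (hM2 : ∀ p q : ℕ, M (p + q) ≤ A * H ^ (p + q) * M p * M q) :
    ∃ L ℓ : ℝ, 0 < L ∧ 0 < ℓ ∧ ∀ t : ℝ, 0 < t →
      (⨅ (y : ℝ) (_ : 0 < y),
          assocExp (fun p => M p / Nat.factorial p) (1 / y) * ENNReal.ofReal (Real.exp (t * y)))
        ≤ ENNReal.ofReal L * assocExp M (ℓ * t) := by
  set E := Real.exp 1 with hEdef
  have hE1 : (1:ℝ) ≤ E := Real.one_le_exp zero_le_one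
  have hEpos : (0:ℝ) < E := Real.exp_pos 1
  have hHpos : (0:ℝ) < H := lt_of_lt_of_le one_pos hH
  refine ⟨E * A, E * H^2, by positivity, by positivity, ?_⟩
  intro t ht
  -- μ_p = M p / (p · M (p-1)) is nondecreasing (consequence of (M.1)*)
  have hmu : ∀ p : ℕ, ((p:ℝ)+2) * M (p+1)^2 ≤ ((p:ℝ)+1) * (M p * M (p+2)) := by
    intro p
    have h := hM1star (p+1) (by omega)
    simp only [Nat.add_sub_cancel] at h
    have hf : (0:ℝ) < (Nat.factorial p : ℝ) := by positivity
    rw [show p + 1 + 1 = p + 2 from rfl, Nat.factorial_succ (p+1), Nat.factorial_succ p] at h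
    push_cast at h
    rw [div_pow, div_mul_div_comm, div_le_div_iff₀ (by positivity) (by positivity)] at h
    have hpf : (0:ℝ) < ((p:ℝ)+1) * (Nat.factorial p:ℝ)^2 := by positivity
    nlinarith [h, hpf, mul_pos hpf (hMpos (p+1))]
  have hmumono : ∀ a b : ℕ, a ≤ b →
      ((b:ℝ)+1) * (M (a+1) * M b) ≤ ((a:ℝ)+1) * (M a * M (b+1)) := by
    intro a b hab
    induction b, hab using Nat.le_induction with
    | base => ring_nf; exact le_refl _
    | succ b hab ih =>
      have h2 := hmu b
      have hb := hMpos b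
      have hb1 := hMpos (b+1)
      have hb2 := hMpos (b+2)
      have ha := hMpos a
      have ha1 := hMpos (a+1)
      push_cast
      nlinarith [mul_le_mul_of_nonneg_left ih (le_of_lt hb1),
        mul_le_mul_of_nonneg_left h2 (mul_nonneg (le_of_lt ha) (by positivity : (0:ℝ) ≤ (a:ℝ)+1)),
        mul_pos hb hb1]
  have hgrow : ∀ p : ℕ, ((p:ℝ)+1) * M 1 * M p ≤ M (p+1) := by
    intro p
    have := hmumono 0 p (Nat.zero_le p)
    simp [hM0] at this
    nlinarith [this, hMpos p, hMpos (p+1), hMpos 1]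
  have hex : ∃ n : ℕ, ¬ (M (n+1) ≤ H * t * M n) := by
    obtain ⟨n, hn⟩ := exists_nat_gt (H * t / M 1)
    refine ⟨n, not_le.2 ?_⟩
    have h1 : H * t < n * M 1 := by
      rw [div_lt_iff₀ (hMpos 1)] at hn; linarith
    calc H * t * M n < (n * M 1) * M n :=
          mul_lt_mul_of_pos_right h1 (hMpos n)
      _ ≤ ((n:ℝ)+1) * M 1 * M n := by nlinarith [hMpos n, hMpos 1]
      _ ≤ M (n+1) := hgrow n
  set N := Nat.find hex with hNdef
  have hN1 : H * t * M N < M (N+1) := lt_of_not_ge (Nat.find_spec hex)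
  have hN2 : ∀ j, j < N → M (j+1) ≤ H * t * M j := by
    intro j hj
    exact not_not.mp (Nat.find_min hex hj)
  have hup : ∀ j, j ≤ N → M j ≤ (H*t)^j := by
    intro j hj
    induction j with
    | zero => simp [hM0]
    | succ j ih =>
      calc M (j+1) ≤ H * t * M j := hN2 j (by omega)
        _ ≤ H * t * (H*t)^j :=
            mul_le_mul_of_nonneg_left (ih (by omega)) (by positivity)
        _ = (H*t)^(j+1) := by ring
  set k := N + 1 with hkdef
  have hkpos : (0:ℝ) < (k:ℝ) := by positivity
  have hlow : ∀ j : ℕ, M k * (Nat.factorial (k+j)) * (H*t)^j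
      ≤ M (k+j) * (Nat.factorial k) * (k:ℝ)^j := by
    intro j
    induction j with
    | zero => simp
    | succ j ih =>
      have key : ((k:ℝ)+j+1) * (H*t) * M (k+j) ≤ (k:ℝ) * M (k+j+1) := by
        have h1 := hmumono N (k+j) (by omega)
        have h2 : H * t * M N < M k := hN1
        have hMN := hMpos N
        have hMkj := hMpos (k+j)
        have hMkj1 := hMpos (k+j+1)
        push_cast [hkdef] at h1 ⊢
        nlinarith [mul_le_mul_of_nonneg_left h2.le
            (by positivity : (0:ℝ) ≤ ((N:ℝ)+1+j+1) * M (k+j)),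
          mul_pos hMN hMkj]
      have hfc : ((Nat.factorial (k+(j+1))):ℝ) = ((k:ℝ)+j+1) * (Nat.factorial (k+j)) := by
        rw [show k + (j+1) = (k+j) + 1 from rfl, Nat.factorial_succ]
        push_cast; ring
      calc M k * (Nat.factorial (k+(j+1))) * (H*t)^(j+1)
          = ((k:ℝ)+j+1) * (H*t) * (M k * (Nat.factorial (k+j)) * (H*t)^j) := by
            rw [hfc]; ring
        _ ≤ ((k:ℝ)+j+1) * (H*t) * (M (k+j) * (Nat.factorial k) * (k:ℝ)^j) :=
            mul_le_mul_of_nonneg_left ih (by positivity)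
        _ = (((k:ℝ)+j+1) * (H*t) * M (k+j)) * ((Nat.factorial k) * (k:ℝ)^j) := by ring
        _ ≤ ((k:ℝ) * M (k+j+1)) * ((Nat.factorial k) * (k:ℝ)^j) :=
            mul_le_mul_of_nonneg_right key (by positivity)
        _ = M (k+(j+1)) * (Nat.factorial k) * (k:ℝ)^(j+1) := by
            rw [show k + (j+1) = k+j+1 from rfl]; ring
  have key2 : ∀ r : ℕ, E^k * (t^r / M r) ≤ (E*A) * ((E*H^2*t)^(N+r) / M (N+r)) := by
    intro r
    rw [mul_div_assoc', mul_div_assoc', div_le_div_iff₀ (hMpos r) (hMpos (N+r))]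
    calc E^k * t^r * M (N+r) ≤ E^k * t^r * (A * H^(N+r) * M N * M r) :=
          mul_le_mul_of_nonneg_left (hM2 N r) (by positivity)
      _ ≤ E^k * t^r * (A * H^(N+r) * (H*t)^N * M r) := by
          refine mul_le_mul_of_nonneg_left ?_ (by positivity)
          refine mul_le_mul_of_nonneg_right ?_ (hMpos r).le
          exact mul_le_mul_of_nonneg_left (hup N le_rfl) (by positivity)
      _ = (E^k * H^(N+r+N)) * (A * t^(N+r) * M r) := by ring
      _ ≤ (E^(N+r+1) * H^(2*(N+r))) * (A * t^(N+r) * M r) := by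
          refine mul_le_mul_of_nonneg_right ?_ (mul_nonneg (by positivity) (hMpos r).le)
          exact mul_le_mul (pow_le_pow_right₀ hE1 (by omega))
            (pow_le_pow_right₀ hH (by omega)) (by positivity) (by positivity)
      _ = (E*A) * (E*H^2*t)^(N+r) * M r := by ring
  have hy : (0:ℝ) < (k:ℝ)/t := by positivity
  refine le_trans (iInf₂_le ((k:ℝ)/t) hy) ?_
  have h1y : 1 / ((k:ℝ)/t) = t / k := by field_simp
  have hty : t * ((k:ℝ)/t) = (k:ℝ) := by field_simp
  rw [h1y, hty]
  have hexpk : Real.exp (k:ℝ) = E^k := by rw [hEdef, Real.exp_one_pow]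
  rw [hexpk]
  simp only [assocExp]
  rw [ENNReal.iSup_mul]
  refine iSup_le fun q => ?_
  have hterm : (t/(k:ℝ))^q / (M q / (Nat.factorial q)) * E^k
      ≤ (E*A) * ((E*H^2*t)^(if q ≤ k then N + q else N + k) / M (if q ≤ k then N + q else N + k)) := by
    split_ifs with hq
    · refine le_trans ?_ (key2 q)
      have hfq : ((Nat.factorial q):ℝ) ≤ (k:ℝ)^q := by
        calc ((Nat.factorial q):ℝ) ≤ (q:ℝ)^q := by exact_mod_cast Nat.factorial_le_pow q
          _ ≤ (k:ℝ)^q := by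
              apply pow_le_pow_left₀ (by positivity)
              exact_mod_cast hq
      have e1 : (t/(k:ℝ))^q / (M q / (Nat.factorial q))
          = ((Nat.factorial q):ℝ) * t^q / ((k:ℝ)^q * M q) := by
        rw [div_pow]
        rw [div_div_div_comm]
        rw [div_div_eq_mul_div, div_mul_eq_mul_div]
        ring_nf
      rw [e1, div_mul_eq_mul_div, div_le_iff₀ (mul_pos (by positivity) (hMpos q))]
      have e2 : E^k * (t^q / M q) * ((k:ℝ)^q * M q) = E^k * t^q * (k:ℝ)^q := by
        field_simp [(hMpos q).ne']
      rw [e2]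
      calc ((Nat.factorial q):ℝ) * t^q * E^k ≤ (k:ℝ)^q * t^q * E^k :=
            mul_le_mul_of_nonneg_right (mul_le_mul_of_nonneg_right hfq (by positivity)) (by positivity)
        _ = E^k * t^q * (k:ℝ)^q := by ring
    · refine le_trans ?_ (key2 k)
      obtain ⟨j, rfl⟩ : ∃ j, q = k + j := ⟨q - k, by omega⟩
      have hfk : ((Nat.factorial k):ℝ) ≤ (k:ℝ)^k := by exact_mod_cast Nat.factorial_le_pow k
      have hHj : (0:ℝ) < H^j := by positivity
      have T : ((Nat.factorial (k+j)):ℝ) * t^(k+j) * M k ≤ t^k * (k:ℝ)^(k+j) * M (k+j) := by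
        rw [← mul_le_mul_iff_right₀ hHj]
        calc H^j * (((Nat.factorial (k+j)):ℝ) * t^(k+j) * M k)
            = (M k * (Nat.factorial (k+j)) * (H*t)^j) * t^k := by ring
          _ ≤ (M (k+j) * (Nat.factorial k) * (k:ℝ)^j) * t^k :=
              mul_le_mul_of_nonneg_right (hlow j) (by positivity)
          _ ≤ (M (k+j) * (k:ℝ)^k * (k:ℝ)^j) * t^k := by
              refine mul_le_mul_of_nonneg_right ?_ (by positivity)
              refine mul_le_mul_of_nonneg_right ?_ (by positivity)
              exact mul_le_mul_of_nonneg_left hfk (hMpos (k+j)).le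
          _ = 1 * (t^k * (k:ℝ)^(k+j) * M (k+j)) := by ring
          _ ≤ H^j * (t^k * (k:ℝ)^(k+j) * M (k+j)) := by
              refine mul_le_mul_of_nonneg_right (one_le_pow₀ hH) (mul_nonneg (mul_nonneg (by positivity) (by positivity)) (hMpos (k+j)).le)
      have e1 : (t/(k:ℝ))^(k+j) / (M (k+j) / (Nat.factorial (k+j)))
          = ((Nat.factorial (k+j)):ℝ) * t^(k+j) / ((k:ℝ)^(k+j) * M (k+j)) := by
        rw [div_pow, div_div_div_comm, div_div_eq_mul_div, div_mul_eq_mul_div]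
        ring_nf
      rw [e1, div_mul_eq_mul_div, div_le_iff₀ (mul_pos (by positivity) (hMpos (k+j))),
        mul_div_assoc', div_mul_eq_mul_div, le_div_iff₀ (hMpos k)]
      calc ((Nat.factorial (k+j)):ℝ) * t^(k+j) * E^k * M k
          = E^k * (((Nat.factorial (k+j)):ℝ) * t^(k+j) * M k) := by ring
        _ ≤ E^k * (t^k * (k:ℝ)^(k+j) * M (k+j)) :=
            mul_le_mul_of_nonneg_left T (by positivity)
        _ = E^k * t^k * ((k:ℝ)^(k+j) * M (k+j)) := by ring
  calc ENNReal.ofReal ((t/(k:ℝ))^q / ((fun p => M p / (Nat.factorial p : ℝ)) q)) * ENNReal.ofReal (E^k)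
      = ENNReal.ofReal ((t/(k:ℝ))^q / (M q / (Nat.factorial q)) * E^k) := by
        rw [ENNReal.ofReal_mul (div_nonneg (by positivity)
          (div_nonneg (hMpos q).le (by positivity)))]
    _ ≤ ENNReal.ofReal ((E*A) * ((E*H^2*t)^(if q ≤ k then N + q else N + k)
          / M (if q ≤ k then N + q else N + k))) := ENNReal.ofReal_le_ofReal hterm
    _ = ENNReal.ofReal (E*A) * ENNReal.ofReal ((E*H^2*t)^(if q ≤ k then N + q else N + k)
          / M (if q ≤ k then N + q else N + k)) := by
        rw [ENNReal.ofReal_mul (by positivity)]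
    _ ≤ ENNReal.ofReal (E*A) * ⨆ p, ENNReal.ofReal ((E*H^2*t)^p / M p) :=
        mul_le_mul_right (le_iSup (fun p => ENNReal.ofReal ((E*H^2*t)^p / M p)) _) _
end

section
/- Let M_p be a weight sequence satisfying (M.1) and (M.2)' with associated function M and M*(t) = sup_p log(p!t^p/M_p). If f_j ∈ H_j(S^{n-1}) satisfy ‖f_j‖_{L^∞(S^{n-1})} ≤ C·e^{M(hj)} for all j and some C, h > 0, then the harmonic function U(rω) = ∑_{j≥0} r^j f_j(ω) on the unit ball satisfies |U(x)| ≤ C'·exp(M*(H³h/(1−|x|))) for all x in the unit ball, for some constant C' depending on C, h, A, H. -/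
open MvPolynomial

/-- `φ` is a spherical harmonic of degree `j` on `S^{n-1}`: the restriction of a harmonic
homogeneous polynomial of degree `j`. -/
def IsSphHarm (n j : ℕ) (φ : C(Metric.sphere (0 : EuclideanSpace ℝ (Fin n)) 1, ℝ)) : Prop :=
  ∃ Q : MvPolynomial (Fin n) ℝ, Q.IsHomogeneous j ∧
    (∑ i : Fin n, pderiv i (pderiv i Q)) = 0 ∧
    ∀ x : Metric.sphere (0 : EuclideanSpace ℝ (Fin n)) 1,
      φ x = MvPolynomial.eval (fun i => (x : EuclideanSpace ℝ (Fin n)) i) Q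

lemma keyIneq (M : ℕ → ℝ) (hMpos : ∀ p, 0 < M p) (A H : ℝ) (hA : 1 < A) (hH : 1 < H)
    (hM2 : ∀ p : ℕ, M (p + 1) ≤ A * H ^ p * M p)
    (h s S : ℝ) (hh : 0 < h) (hs : 0 < s) (hS : 0 ≤ S)
    (hSb : ∀ p : ℕ, s ^ p / (M p / (Nat.factorial p : ℝ)) ≤ S)
    (j : ℕ) (hj : 1 ≤ j) (p : ℕ) :
    (h * j) ^ p / M p ≤
      A ^ 2 * S / (H ^ 3 * h ^ 2 * (j : ℝ) ^ 2) * Real.exp (H ^ 2 * h * j / s) := by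
  have hH0 : (0:ℝ) < H := lt_trans one_pos hH
  have hA0 : (0:ℝ) < A := lt_trans one_pos hA
  have hj' : (0:ℝ) < j := by exact_mod_cast hj
  have hMp := hMpos p
  have hMp2 := hMpos (p + 2)
  set x : ℝ := H ^ 2 * h * j / s with hxdef
  have hx0 : 0 ≤ x := by positivity
  have hE : x ^ (p + 2) ≤ Real.exp x * (Nat.factorial (p + 2) : ℝ) := by
    have := Real.pow_div_factorial_le_exp x hx0 (p + 2)
    have hf : (0:ℝ) < (Nat.factorial (p + 2) : ℝ) := by positivity
    calc x ^ (p+2) = x ^ (p+2) / (Nat.factorial (p+2) : ℝ) * (Nat.factorial (p+2) : ℝ) := by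
          field_simp
      _ ≤ Real.exp x * (Nat.factorial (p + 2) : ℝ) := by
          exact mul_le_mul_of_nonneg_right this hf.le
  have h1 : M (p + 2) ≤ A ^ 2 * H ^ (2 * p + 1) * M p := by
    have a1 := hM2 p
    have a2 := hM2 (p + 1)
    have hHp : (0:ℝ) < H ^ (p+1) := by positivity
    calc M (p + 2) ≤ A * H ^ (p + 1) * M (p + 1) := a2
      _ ≤ A * H ^ (p + 1) * (A * H ^ p * M p) := by
          exact mul_le_mul_of_nonneg_left a1 (by positivity)
      _ = A ^ 2 * H ^ (2 * p + 1) * M p := by ring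
  have h2 : s ^ (p + 2) * (Nat.factorial (p + 2) : ℝ) ≤ S * M (p + 2) := by
    have := hSb (p + 2)
    rw [div_div_eq_mul_div] at this
    exact (div_le_iff₀ hMp2).mp this
  have h3 : s ^ (p + 2) * (Nat.factorial (p + 2) : ℝ) ≤ S * (A ^ 2 * H ^ (2 * p + 1) * M p) :=
    le_trans h2 (mul_le_mul_of_nonneg_left h1 hS)
  have h5 : (H ^ 2 * h * (j:ℝ)) ^ (p + 2) = x ^ (p + 2) * s ^ (p + 2) := by
    rw [← mul_pow]
    congr 1
    rw [hxdef, div_mul_cancel₀ _ hs.ne']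
  have hchain : ((h * j) ^ p * (H ^ 3 * h ^ 2 * (j:ℝ) ^ 2)) * H ^ (2 * p + 1) ≤
      (Real.exp x * (S * A ^ 2 * M p)) * H ^ (2 * p + 1) := by
    have e1 : ((h * (j:ℝ)) ^ p * (H ^ 3 * h ^ 2 * (j:ℝ) ^ 2)) * H ^ (2 * p + 1)
        = (H ^ 2 * h * (j:ℝ)) ^ (p + 2) := by ring
    rw [e1, h5]
    calc x ^ (p + 2) * s ^ (p + 2)
        ≤ (Real.exp x * (Nat.factorial (p + 2) : ℝ)) * s ^ (p + 2) :=
          mul_le_mul_of_nonneg_right hE (by positivity)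
      _ = Real.exp x * (s ^ (p + 2) * (Nat.factorial (p + 2) : ℝ)) := by ring
      _ ≤ Real.exp x * (S * (A ^ 2 * H ^ (2 * p + 1) * M p)) :=
          mul_le_mul_of_nonneg_left h3 (Real.exp_nonneg x)
      _ = (Real.exp x * (S * A ^ 2 * M p)) * H ^ (2 * p + 1) := by ring
  have h6 : (h * j) ^ p * (H ^ 3 * h ^ 2 * (j:ℝ) ^ 2) ≤ Real.exp x * (S * A ^ 2 * M p) :=
    le_of_mul_le_mul_right hchain (by positivity)
  have hD : (0:ℝ) < H ^ 3 * h ^ 2 * (j:ℝ) ^ 2 := by positivity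
  rw [div_le_iff₀ hMp]
  calc (h * (j:ℝ)) ^ p
      = ((h * (j:ℝ)) ^ p * (H ^ 3 * h ^ 2 * (j:ℝ) ^ 2)) / (H ^ 3 * h ^ 2 * (j:ℝ) ^ 2) := by
        field_simp
    _ ≤ (Real.exp x * (S * A ^ 2 * M p)) / (H ^ 3 * h ^ 2 * (j:ℝ) ^ 2) := by
        gcongr
    _ = A ^ 2 * S / (H ^ 3 * h ^ 2 * (j:ℝ) ^ 2) * Real.exp x * M p := by ring

/-- Let `M_p` satisfy (M.1) and (M.2)'.  If `f_j ∈ H_j(S^{n-1})` satisfy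
`‖f_j‖_∞ ≤ C·e^{M(hj)}`, then the harmonic function `U(rω) = ∑_j r^j f_j(ω)` on the unit
ball satisfies `|U(rω)| ≤ C'·exp(M*(H³h/(1−r)))` for some constant `C'`. -/
theorem stmt14 (n : ℕ) (hn : 2 ≤ n)
    (M : ℕ → ℝ) (hMpos : ∀ p, 0 < M p) (hM0 : M 0 = 1)
    (hM1 : ∀ p : ℕ, 1 ≤ p → (M p) ^ 2 ≤ M (p - 1) * M (p + 1))
    (A H : ℝ) (hA : 1 < A) (hH : 1 < H)
    (hM2 : ∀ p : ℕ, M (p + 1) ≤ A * H ^ p * M p)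
    (fj : ℕ → C(Metric.sphere (0 : EuclideanSpace ℝ (Fin n)) 1, ℝ))
    (hsh : ∀ j, IsSphHarm n j (fj j))
    (C h : ℝ) (hC : 0 < C) (hh : 0 < h)
    (hb : ∀ j : ℕ, ENNReal.ofReal ‖fj j‖ ≤ ENNReal.ofReal C * assocExp M (h * j)) :
    ∃ C' : ℝ, 0 < C' ∧ ∀ (r : ℝ), 0 ≤ r → r < 1 →
      ∀ ω : Metric.sphere (0 : EuclideanSpace ℝ (Fin n)) 1,
        ENNReal.ofReal |∑' j : ℕ, r ^ j * fj j ω| ≤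
          ENNReal.ofReal C' *
            assocExp (fun p => M p / Nat.factorial p) (H ^ 3 * h / (1 - r)) := by
  have hH0 : (0:ℝ) < H := lt_trans one_pos hH
  have hA0 : (0:ℝ) < A := lt_trans one_pos hA
  -- the comparison series ∑ 1/(j+1)²
  have hgsum : Summable (fun j : ℕ => 1 / ((j:ℝ) + 1) ^ 2) := by
    have h0 : Summable (fun j : ℕ => 1 / ((j:ℝ)) ^ 2) := Real.summable_one_div_nat_pow.mpr one_lt_two
    have := (_root_.summable_nat_add_iff (f := fun j : ℕ => 1 / ((j:ℝ)) ^ 2) 1).mpr h0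
    simpa using this
  set T : ℝ := ∑' j : ℕ, 1 / ((j:ℝ) + 1) ^ 2 with hTdef
  have hT1 : (1:ℝ) ≤ T := by
    have := Summable.le_tsum hgsum 0 (fun i _ => by positivity)
    simp only [Nat.cast_zero, zero_add, one_pow, div_one] at this
    exact this
  have hT0 : (0:ℝ) < T := lt_of_lt_of_le one_pos hT1
  refine ⟨C * (1 + 4 * A ^ 2 / (H ^ 3 * h ^ 2)) * T, by positivity, ?_⟩
  intro r hr0 hr1 ω
  set s : ℝ := H ^ 3 * h / (1 - r) with hsdef
  have hr1' : (0:ℝ) < 1 - r := by linarith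
  have hs : 0 < s := by positivity
  by_cases htop : assocExp (fun p => M p / Nat.factorial p) s = ⊤
  · rw [htop, ENNReal.mul_top]
    · exact le_top
    · simp only [ne_eq, ENNReal.ofReal_eq_zero, not_le]
      positivity
  -- finite case
  set S : ℝ := (assocExp (fun p => M p / Nat.factorial p) s).toReal with hSdef
  have hSb : ∀ p : ℕ, s ^ p / (M p / (Nat.factorial p : ℝ)) ≤ S := by
    intro p
    have h1 : ENNReal.ofReal (s ^ p / (M p / (Nat.factorial p : ℝ))) ≤
        assocExp (fun p => M p / Nat.factorial p) s := by
      simp only [assocExp]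
      exact le_iSup (fun q => ENNReal.ofReal (s ^ q / (M q / (Nat.factorial q : ℝ)))) p
    have h2 := ENNReal.toReal_mono htop h1
    have hnn : 0 ≤ s ^ p / (M p / (Nat.factorial p : ℝ)) :=
      div_nonneg (pow_nonneg hs.le _) (div_nonneg (hMpos p).le (Nat.cast_nonneg _))
    rwa [ENNReal.toReal_ofReal hnn] at h2
  have hS1 : (1:ℝ) ≤ S := by
    have := hSb 0
    simpa [hM0] using this
  have hS0 : (0:ℝ) ≤ S := le_trans zero_le_one hS1
  -- bound on ‖fj j‖ for j ≥ 1
  have hfb : ∀ j : ℕ, 1 ≤ j → ‖fj j‖ ≤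
      C * (A ^ 2 * S / (H ^ 3 * h ^ 2 * (j:ℝ) ^ 2) * Real.exp (H ^ 2 * h * j / s)) := by
    intro j hj
    have hj' : (0:ℝ) < j := by exact_mod_cast hj
    have hCj : (0:ℝ) ≤ A ^ 2 * S / (H ^ 3 * h ^ 2 * (j:ℝ) ^ 2) * Real.exp (H ^ 2 * h * j / s) := by
      positivity
    have hkey : assocExp M (h * j) ≤
        ENNReal.ofReal (A ^ 2 * S / (H ^ 3 * h ^ 2 * (j:ℝ) ^ 2) * Real.exp (H ^ 2 * h * j / s)) := by
      simp only [assocExp]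
      refine iSup_le fun p => ?_
      exact ENNReal.ofReal_le_ofReal (keyIneq M hMpos A H hA hH hM2 h s S hh hs hS0 hSb j hj p)
    have := le_trans (hb j) (mul_le_mul_right hkey _)
    rw [← ENNReal.ofReal_mul hC.le] at this
    exact (ENNReal.ofReal_le_ofReal_iff (by positivity)).mp this
  -- bound on ‖fj 0‖
  have hfb0 : ‖fj 0‖ ≤ C * S := by
    have hkey : assocExp M (h * (0:ℕ)) ≤ ENNReal.ofReal S := by
      simp only [assocExp]
      refine iSup_le fun p => ?_
      refine ENNReal.ofReal_le_ofReal ?_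
      cases p with
      | zero => simpa [hM0] using hS1
      | succ q =>
        have : (h * ((0:ℕ):ℝ)) ^ (q + 1) / M (q + 1) = 0 := by
          simp [pow_succ]
        rw [this]; exact hS0
    have := le_trans (hb 0) (mul_le_mul_right hkey _)
    rw [← ENNReal.ofReal_mul hC.le] at this
    exact (ENNReal.ofReal_le_ofReal_iff (by positivity)).mp this
  -- geometric damping: r^j · exp(H²hj/s) ≤ 1
  have hdamp : ∀ j : ℕ, r ^ j * Real.exp (H ^ 2 * h * j / s) ≤ 1 := by
    intro j
    have hxs : H ^ 2 * h * (j:ℝ) / s = (j:ℝ) * (1 - r) / H := by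
      rw [hsdef]; field_simp
    have hrexp : r ≤ Real.exp (-(1 - r)) := by
      have := Real.add_one_le_exp (-(1 - r))
      linarith
    have hpow : r ^ j ≤ Real.exp (-(1 - r)) ^ j := pow_le_pow_left₀ hr0 hrexp j
    have hj0 : (0:ℝ) ≤ (j:ℝ) := Nat.cast_nonneg j
    calc r ^ j * Real.exp (H ^ 2 * h * j / s)
        ≤ Real.exp (-(1 - r)) ^ j * Real.exp (H ^ 2 * h * j / s) := by
          exact mul_le_mul_of_nonneg_right hpow (Real.exp_nonneg _)
      _ = Real.exp ((j:ℝ) * (-(1 - r)) + (j:ℝ) * (1 - r) / H) := by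
          rw [← Real.exp_nat_mul, ← Real.exp_add, hxs]
      _ ≤ 1 := by
          rw [Real.exp_le_one_iff]
          have h1H : 1 / H ≤ 1 := by
            rw [div_le_one hH0]; exact hH.le
          have : (j:ℝ) * (-(1 - r)) + (j:ℝ) * (1 - r) / H
              = (j:ℝ) * (1 - r) * (1 / H - 1) := by ring
          rw [this]
          have hfac : 1 / H - 1 ≤ 0 := by linarith
          have : (0:ℝ) ≤ (j:ℝ) * (1 - r) := by positivity
          exact mul_nonpos_of_nonneg_of_nonpos this hfac
  -- the termwise bound
  set D : ℝ := C * S * (1 + 4 * A ^ 2 / (H ^ 3 * h ^ 2)) with hDdef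
  have hD0 : 0 < D := by positivity
  have hterm : ∀ j : ℕ, ‖r ^ j * fj j ω‖ ≤ D / ((j:ℝ) + 1) ^ 2 := by
    intro j
    have hfjω : |(fj j) ω| ≤ ‖fj j‖ := (fj j).norm_coe_le_norm ω
    have habs : ‖r ^ j * fj j ω‖ = r ^ j * |(fj j) ω| := by
      rw [Real.norm_eq_abs, abs_mul, abs_pow, abs_of_nonneg hr0]
    rw [habs]
    rcases Nat.eq_zero_or_pos j with hj | hj
    · subst hj
      simp only [pow_zero, one_mul, Nat.cast_zero, zero_add, one_pow, div_one]
      calc |(fj 0) ω| ≤ ‖fj 0‖ := hfjω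
        _ ≤ C * S := hfb0
        _ ≤ D := by
            rw [hDdef]
            nlinarith [sq_nonneg A, mul_pos hC (lt_of_lt_of_le one_pos hS1),
              mul_pos (mul_pos hC (lt_of_lt_of_le one_pos hS1))
                (div_pos (by positivity : (0:ℝ) < 4 * A ^ 2) (by positivity : (0:ℝ) < H ^ 3 * h ^ 2))]
    · have hj1 : 1 ≤ j := hj
      have hj' : (0:ℝ) < j := by exact_mod_cast hj
      calc r ^ j * |(fj j) ω|
          ≤ r ^ j * (C * (A ^ 2 * S / (H ^ 3 * h ^ 2 * (j:ℝ) ^ 2) * Real.exp (H ^ 2 * h * j / s))) := by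
            refine mul_le_mul_of_nonneg_left (le_trans hfjω (hfb j hj1)) (by positivity)
        _ = C * (A ^ 2 * S / (H ^ 3 * h ^ 2 * (j:ℝ) ^ 2)) * (r ^ j * Real.exp (H ^ 2 * h * j / s)) := by
            ring
        _ ≤ C * (A ^ 2 * S / (H ^ 3 * h ^ 2 * (j:ℝ) ^ 2)) * 1 := by
            exact mul_le_mul_of_nonneg_left (hdamp j) (by positivity)
        _ ≤ D / ((j:ℝ) + 1) ^ 2 := by
            rw [mul_one, hDdef]
            rw [le_div_iff₀ (by positivity : (0:ℝ) < ((j:ℝ) + 1) ^ 2)]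
            have hCS : (0:ℝ) ≤ C * S := mul_nonneg hC.le hS0
            have e : C * (A ^ 2 * S / (H ^ 3 * h ^ 2 * (j:ℝ) ^ 2)) * ((j:ℝ) + 1) ^ 2
                = C * S * (A ^ 2 / (H ^ 3 * h ^ 2)) * (((j:ℝ) + 1) ^ 2 / (j:ℝ) ^ 2) := by
              field_simp
            rw [e]
            have h2 : ((j:ℝ) + 1) ^ 2 / (j:ℝ) ^ 2 ≤ 4 := by
              rw [div_le_iff₀ (by positivity)]
              nlinarith [show (1:ℝ) ≤ (j:ℝ) from by exact_mod_cast hj1]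
            have hP : (0:ℝ) ≤ C * S * (A ^ 2 / (H ^ 3 * h ^ 2)) :=
              mul_nonneg hCS (by positivity)
            calc C * S * (A ^ 2 / (H ^ 3 * h ^ 2)) * (((j:ℝ) + 1) ^ 2 / (j:ℝ) ^ 2)
                ≤ C * S * (A ^ 2 / (H ^ 3 * h ^ 2)) * 4 := mul_le_mul_of_nonneg_left h2 hP
              _ = C * S * (4 * A ^ 2 / (H ^ 3 * h ^ 2)) := by ring
              _ ≤ C * S * (1 + 4 * A ^ 2 / (H ^ 3 * h ^ 2)) :=
                  mul_le_mul_of_nonneg_left (le_add_of_nonneg_left zero_le_one) hCS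
  -- summability and the tsum bound
  have hDsum : Summable (fun j : ℕ => D / ((j:ℝ) + 1) ^ 2) := by
    simpa [div_eq_mul_inv, mul_comm] using hgsum.mul_left D
  have hnsum : Summable (fun j : ℕ => ‖r ^ j * fj j ω‖) :=
    Summable.of_nonneg_of_le (fun j => norm_nonneg _) hterm hDsum
  have habs : |∑' j : ℕ, r ^ j * fj j ω| ≤ D * T := by
    calc |∑' j : ℕ, r ^ j * fj j ω| = ‖∑' j : ℕ, r ^ j * fj j ω‖ := (Real.norm_eq_abs _).symm
      _ ≤ ∑' j : ℕ, ‖r ^ j * fj j ω‖ := norm_tsum_le_tsum_norm hnsum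
      _ ≤ ∑' j : ℕ, D / ((j:ℝ) + 1) ^ 2 := Summable.tsum_le_tsum hterm hnsum hDsum
      _ = D * T := by
          rw [hTdef, ← tsum_mul_left]
          congr 1 with j
          rw [mul_one_div]
  have hfinal : D * T = C * (1 + 4 * A ^ 2 / (H ^ 3 * h ^ 2)) * T * S := by
    rw [hDdef]; ring
  calc ENNReal.ofReal |∑' j : ℕ, r ^ j * fj j ω|
      ≤ ENNReal.ofReal (C * (1 + 4 * A ^ 2 / (H ^ 3 * h ^ 2)) * T * S) := by
        exact ENNReal.ofReal_le_ofReal (by rw [← hfinal]; exact habs)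
    _ = ENNReal.ofReal (C * (1 + 4 * A ^ 2 / (H ^ 3 * h ^ 2)) * T) * ENNReal.ofReal S := by
        rw [ENNReal.ofReal_mul (by positivity)]
    _ = ENNReal.ofReal (C * (1 + 4 * A ^ 2 / (H ^ 3 * h ^ 2)) * T) *
          assocExp (fun p => M p / Nat.factorial p) s := by
        rw [hSdef, ENNReal.ofReal_toReal htop]
end

section
/- Let M_p satisfy (M.1). Then condition (NA) (for every L > 0 there is A_L with p! ≤ A_L·L^p·M_p for all p) holds if and only if the associated function satisfies M(t) = o(t) as t → ∞. -/
/-- For `M_p` satisfying (M.1), condition (NA) — for every `L > 0` there is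
`A_L > 0` with `p! ≤ A_L·L^p·M_p` for all `p` — holds if and only if the associated
function satisfies `M(t) = o(t)` as `t → ∞` (equivalently, for every `ε > 0` one has
`e^{M(t)} ≤ e^{εt}` for all sufficiently large `t`). -/
theorem stmt18 (M : ℕ → ℝ) (hMpos : ∀ p, 0 < M p) (hM0 : M 0 = 1)
    (hM1 : ∀ p : ℕ, 1 ≤ p → (M p) ^ 2 ≤ M (p - 1) * M (p + 1)) :
    (∀ L : ℝ, 0 < L → ∃ A : ℝ, 0 < A ∧ ∀ p : ℕ, (Nat.factorial p : ℝ) ≤ A * L ^ p * M p) ↔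
      (∀ ε : ℝ, 0 < ε → ∃ T : ℝ, ∀ t : ℝ, T ≤ t →
        assocExp M t ≤ ENNReal.ofReal (Real.exp (ε * t))) := by
  constructor
  · -- (NA) → o(t)
    intro hNA ε hε
    obtain ⟨A, hA, hAp⟩ := hNA (ε / 2) (by linarith)
    refine ⟨max 0 (2 * Real.log A / ε), fun t ht => ?_⟩
    have ht0 : 0 ≤ t := le_trans (le_max_left _ _) ht
    have hAe : A ≤ Real.exp (ε / 2 * t) := by
      rw [← Real.exp_log hA]
      apply Real.exp_le_exp.2
      have h2 : 2 * Real.log A / ε ≤ t := le_trans (le_max_right _ _) ht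
      rw [div_le_iff₀ hε] at h2
      nlinarith
    refine iSup_le fun p => ENNReal.ofReal_le_ofReal ?_
    have hfac : (0 : ℝ) < p.factorial := by positivity
    have h1 : t ^ p / M p ≤ A * (ε / 2 * t) ^ p / p.factorial := by
      rw [div_le_div_iff₀ (hMpos p) hfac, mul_pow]
      have := hAp p
      have htp : (0 : ℝ) ≤ t ^ p := pow_nonneg ht0 p
      nlinarith [mul_le_mul_of_nonneg_left (hAp p) htp]
    have h2 : (ε / 2 * t) ^ p / p.factorial ≤ Real.exp (ε / 2 * t) :=
      Real.pow_div_factorial_le_exp _ (by positivity) p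
    calc t ^ p / M p ≤ A * ((ε / 2 * t) ^ p / p.factorial) := by
          rw [mul_div_assoc] at h1; exact h1
      _ ≤ A * Real.exp (ε / 2 * t) := by
          exact mul_le_mul_of_nonneg_left h2 hA.le
      _ ≤ Real.exp (ε / 2 * t) * Real.exp (ε / 2 * t) := by
          exact mul_le_mul_of_nonneg_right hAe (Real.exp_pos _).le
      _ = Real.exp (ε * t) := by rw [← Real.exp_add]; ring_nf
  · -- o(t) → (NA)
    intro ho L hL
    set ε := L / Real.exp 1 with hεdef
    have hε : 0 < ε := div_pos hL (Real.exp_pos 1)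
    obtain ⟨T, hT⟩ := ho ε hε
    -- choose N with N ≥ ε * T
    obtain ⟨N, hN⟩ := exists_nat_ge (ε * T)
    -- for p ≥ N, p ≥ 1: M p ≥ (p/(e ε))^p, hence p! ≤ L^p M p
    have key : ∀ p : ℕ, N ≤ p → 1 ≤ p → (p.factorial : ℝ) ≤ L ^ p * M p := by
      intro p hNp hp1
      set t := (p : ℝ) / ε with htdef
      have hp0 : (0 : ℝ) < p := by exact_mod_cast hp1
      have ht0 : 0 < t := div_pos hp0 hε
      have hTt : T ≤ t := by
        rw [htdef, le_div_iff₀ hε, mul_comm]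
        calc ε * T ≤ N := hN
          _ ≤ (p : ℝ) := by exact_mod_cast hNp
      have hb := hT t hTt
      have hle : t ^ p / M p ≤ Real.exp (ε * t) := by
        have h1 : ENNReal.ofReal (t ^ p / M p) ≤ ENNReal.ofReal (Real.exp (ε * t)) :=
          le_trans (le_iSup (fun q => ENNReal.ofReal (t ^ q / M q)) p) hb
        exact (ENNReal.ofReal_le_ofReal_iff (Real.exp_pos _).le).1 h1
      have hεt : ε * t = (p : ℝ) := by
        rw [htdef]; field_simp
      rw [hεt] at hle
      have hMlb : t ^ p / Real.exp p ≤ M p := by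
        rw [div_le_iff₀ (hMpos p)] at hle
        rw [div_le_iff₀ (Real.exp_pos _)]
        linarith [hle]
      have hfp : (p.factorial : ℝ) ≤ (p : ℝ) ^ p := by
        exact_mod_cast Nat.factorial_le_pow p
      have hLt : L ^ p * (t ^ p / Real.exp p) = (p : ℝ) ^ p := by
        have hexp : Real.exp (p : ℝ) = Real.exp 1 ^ p := by
          rw [← Real.exp_nat_mul, mul_one]
        have he : Real.exp 1 ≠ 0 := (Real.exp_pos 1).ne'
        rw [htdef, div_pow, hεdef, hexp, div_pow]
        field_simp
      calc (p.factorial : ℝ) ≤ (p : ℝ) ^ p := hfp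
        _ = L ^ p * (t ^ p / Real.exp p) := hLt.symm
        _ ≤ L ^ p * M p := by
            exact mul_le_mul_of_nonneg_left hMlb (pow_nonneg hL.le p)
    -- assemble A covering small p
    set A := 1 + ∑ p ∈ Finset.range (N + 1), (p.factorial : ℝ) / (L ^ p * M p) with hAdef
    have hterm : ∀ p ∈ Finset.range (N + 1), (0 : ℝ) ≤ (p.factorial : ℝ) / (L ^ p * M p) :=
      fun p _ => div_nonneg (Nat.cast_nonneg _) (mul_nonneg (pow_nonneg hL.le p) (hMpos p).le)
    have hA1 : (1 : ℝ) ≤ A := by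
      have := Finset.sum_nonneg hterm
      rw [hAdef]; linarith
    refine ⟨A, by linarith, fun p => ?_⟩
    have hLM : (0 : ℝ) < L ^ p * M p := mul_pos (pow_pos hL p) (hMpos p)
    by_cases hp : p ≤ N
    · have hmem : p ∈ Finset.range (N + 1) := Finset.mem_range.2 (Nat.lt_succ_of_le hp)
      have h1 : (p.factorial : ℝ) / (L ^ p * M p) ≤ A := by
        have := Finset.single_le_sum hterm hmem
        rw [hAdef]; linarith
      rw [div_le_iff₀ hLM] at h1
      calc (p.factorial : ℝ) ≤ A * (L ^ p * M p) := h1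
        _ = A * L ^ p * M p := by ring
    · push_neg at hp
      have h1 : (p.factorial : ℝ) ≤ L ^ p * M p :=
        key p (le_of_lt hp) (le_trans (Nat.one_le_iff_ne_zero.2 (by omega)) le_rfl)
      calc (p.factorial : ℝ) ≤ L ^ p * M p := h1
        _ ≤ A * (L ^ p * M p) := le_mul_of_one_le_left hLM.le hA1
        _ = A * L ^ p * M p := by ring
end
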